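/- arXiv:2010.02760 — 5 statements merged into one kernel-verified Lean document; each statement's English description precedes it below -/
import Mathlib

section
/- Let G be a connected simple graph on n vertices of diameter greater than 3 whose complement G^c is connected, and let u, v be vertices of G with d_G(u,v) > 3. Let s and t be positive integers with s + t = n - 2, s ≥ deg_G(u) and t ≥ deg_G(v). Then λ1(G^c) < λ1(H^c(s,t)). -/
set_option linter.unusedSectionVars false
set_option linter.unusedTactic false
set_option linter.unreachableTactic false
set_option maxHeartbeats 1000000

open SimpleGraph Finset
/-- Distance matrix of a graph. -/
noncomputable def distMatrix {V : Type*} [Fintype V] (G : SimpleGraph V) : Matrix V V ℝ :=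
  Matrix.of fun u v => (G.dist u v : ℝ)

/-- Largest eigenvalue of the distance matrix (distance spectral radius). -/
noncomputable def lam1 {V : Type*} [Fintype V] (G : SimpleGraph V) : ℝ :=
  sSup {μ : ℝ | ∃ x : V → ℝ, x ≠ 0 ∧ (distMatrix G).mulVec x = μ • x}

/-- Least eigenvalue of the distance matrix. -/
noncomputable def lamMin {V : Type*} [Fintype V] (G : SimpleGraph V) : ℝ :=
  sInf {μ : ℝ | ∃ x : V → ℝ, x ≠ 0 ∧ (distMatrix G).mulVec x = μ • x}

/-- `H(s,t)`: complete graph on `s+t` vertices plus vertex `u = s+t` joined to the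
first `s` clique vertices and vertex `v = s+t+1` joined to the remaining `t`. -/
def Hgraph (s t : ℕ) : SimpleGraph (Fin (s + t + 2)) :=
  SimpleGraph.fromRel fun i j =>
    (i.val < s + t ∧ j.val < s + t) ∨
    (i.val = s + t ∧ j.val < s) ∨
    (i.val = s + t + 1 ∧ s ≤ j.val ∧ j.val < s + t)

/-- The double star `T(a,b)`: centers `0, 1`; `a` pendants on `0`, `b` pendants on `1`. -/
def Tdouble (a b : ℕ) : SimpleGraph (Fin (a + b + 2)) :=
  SimpleGraph.fromRel fun i j =>
    (i.val = 0 ∧ j.val = 1) ∨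
    (i.val = 0 ∧ 2 ≤ j.val ∧ j.val < a + 2) ∨
    (i.val = 1 ∧ a + 2 ≤ j.val)

/-- `T1(a,b)`: path `0-1-2` with `a` pendants on `0` and `b` pendants on `2`. -/
def T1graph (a b : ℕ) : SimpleGraph (Fin (a + b + 3)) :=
  SimpleGraph.fromRel fun i j =>
    (i.val = 0 ∧ j.val = 1) ∨ (i.val = 1 ∧ j.val = 2) ∨
    (i.val = 0 ∧ 3 ≤ j.val ∧ j.val < a + 3) ∨
    (i.val = 2 ∧ a + 3 ≤ j.val)

/-- `T2(a,b)`: the double star `T(a,b)` (centers `0,1`, pendants `2..a+1` on `0`,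
`a+2..a+b+1` on `1`) with an extra pendant vertex `a+b+2` attached to the pendant `2`. -/
def T2graph (a b : ℕ) : SimpleGraph (Fin (a + b + 3)) :=
  SimpleGraph.fromRel fun i j =>
    (i.val = 0 ∧ j.val = 1) ∨
    (i.val = 0 ∧ 2 ≤ j.val ∧ j.val < a + 2) ∨
    (i.val = 1 ∧ a + 2 ≤ j.val ∧ j.val < a + b + 2) ∨
    (i.val = 2 ∧ j.val = a + b + 2)

/-- `B1(p,q)`: complete bipartite graph with parts `{0,…,p-1}` and `{p,…,p+q-1}`
minus the edge between `u = 0` and `v = p`. -/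
def B1graph (p q : ℕ) : SimpleGraph (Fin (p + q)) :=
  SimpleGraph.fromRel fun i j =>
    i.val < p ∧ p ≤ j.val ∧ ¬(i.val = 0 ∧ j.val = p)

/-- `B2(p,q)`: `B1(p,q)` where all edges at `w = 1` except the edge to `v = p` are deleted. -/
def B2graph (p q : ℕ) : SimpleGraph (Fin (p + q)) :=
  SimpleGraph.fromRel fun i j =>
    i.val < p ∧ p ≤ j.val ∧ ¬(i.val = 0 ∧ j.val = p) ∧ (i.val = 1 → j.val = p)

/-- `L'` on `n` vertices: `K_{n-2}` on `{0,…,n-3}` minus the edge `wu` (`w = 0`, `u = 1`),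
with a pendant `w' = n-2` at `w` and a pendant `v = n-1` at `u`. -/
def L'graph (n : ℕ) : SimpleGraph (Fin n) :=
  SimpleGraph.fromRel fun i j =>
    (i.val < n - 2 ∧ j.val < n - 2 ∧ ¬(i.val = 0 ∧ j.val = 1) ∧ ¬(i.val = 1 ∧ j.val = 0)) ∨
    (i.val = 0 ∧ j.val = n - 2) ∨
    (i.val = 1 ∧ j.val = n - 1)

/-- `L(p,q)`: disjoint union of `K_p` on `{0,…,p-1}` (minus the edge `wu`, `w = 0`, `u = 1`)
and `K_q` on `{p,…,p+q-1}`, plus the edge from `u = 1` to `v = p`. -/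
def Lgraph (p q : ℕ) : SimpleGraph (Fin (p + q)) :=
  SimpleGraph.fromRel fun i j =>
    (i.val < p ∧ j.val < p ∧ ¬(i.val = 0 ∧ j.val = 1) ∧ ¬(i.val = 1 ∧ j.val = 0)) ∨
    (p ≤ i.val ∧ p ≤ j.val) ∨
    (i.val = 1 ∧ j.val = p)

/-- The star `K_{1,n-1}` on `n` vertices with center `0`. -/
def starGraph (n : ℕ) : SimpleGraph (Fin n) :=
  SimpleGraph.fromRel fun i _ => i.val = 0

namespace Stmt2Aux
open Matrix SimpleGraph

variable {V : Type*} [Fintype V] [DecidableEq V]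

def eigSet (M : Matrix V V ℝ) : Set ℝ :=
  {μ : ℝ | ∃ x : V → ℝ, x ≠ 0 ∧ M.mulVec x = μ • x}

lemma quad_eq (M : Matrix V V ℝ) (x : V → ℝ) :
    x ⬝ᵥ M.mulVec x = ∑ i, ∑ j, M i j * x i * x j := by
  simp only [dotProduct, Matrix.mulVec, Finset.mul_sum]
  exact Finset.sum_congr rfl fun i _ => Finset.sum_congr rfl fun j _ => by ring

lemma dot_self_pos {x : V → ℝ} (hx : x ≠ 0) : 0 < x ⬝ᵥ x := by
  have h0 : 0 ≤ x ⬝ᵥ x := Finset.sum_nonneg fun i _ => mul_self_nonneg _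
  rcases h0.lt_or_eq with h | h
  · exact h
  · exfalso
    apply hx
    funext i
    have h3 := (Finset.sum_eq_zero_iff_of_nonneg (fun i _ => mul_self_nonneg (x i))).mp h.symm i
      (Finset.mem_univ i)
    simp only [Pi.zero_apply]
    nlinarith [h3]

lemma mem_eigSet {M : Matrix V V ℝ} (hM : M.IsHermitian) (j : V) :
    hM.eigenvalues j ∈ eigSet M := by
  refine ⟨⇑(hM.eigenvectorBasis j), ?_, hM.mulVec_eigenvectorBasis j⟩
  intro h
  have h1 : ‖hM.eigenvectorBasis j‖ = 1 := hM.eigenvectorBasis.orthonormal.1 j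
  have h2 : hM.eigenvectorBasis j = 0 := by
    ext i
    exact congrFun h i
  rw [h2] at h1
  simp at h1

lemma psd_of_le {M : Matrix V V ℝ} (hM : M.IsHermitian) {c : ℝ}
    (hc : ∀ j, hM.eigenvalues j ≤ c) :
    ((c • (1 : Matrix V V ℝ)) - M).PosSemidef := by
  have hU : (hM.eigenvectorUnitary : Matrix V V ℝ) *
      star (hM.eigenvectorUnitary : Matrix V V ℝ) = 1 :=
    (Matrix.mem_unitaryGroup_iff).mp (hM.eigenvectorUnitary).2
  have key : c • (1 : Matrix V V ℝ) - M =
      (hM.eigenvectorUnitary : Matrix V V ℝ) * Matrix.diagonal (fun j => c - hM.eigenvalues j) *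
        ((hM.eigenvectorUnitary : Matrix V V ℝ))ᴴ := by
    have hd : Matrix.diagonal (fun j => c - hM.eigenvalues j)
        = c • (1 : Matrix V V ℝ) - Matrix.diagonal hM.eigenvalues := by
      ext i j
      by_cases h : i = j <;> simp [Matrix.diagonal, Matrix.one_apply, h]
    rw [← Matrix.star_eq_conjTranspose, hd, Matrix.mul_sub, Matrix.sub_mul]
    congr 1
    · rw [Matrix.mul_smul, Matrix.mul_one, Matrix.smul_mul, hU]
    · have hsp := hM.spectral_theorem
      have hco : (RCLike.ofReal ∘ hM.eigenvalues : V → ℝ) = hM.eigenvalues := by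
        funext j; simp
      rw [hco] at hsp
      exact hsp
  rw [key]
  exact (Matrix.posSemidef_diagonal_iff.mpr
    fun j => sub_nonneg.mpr (hc j)).mul_mul_conjTranspose_same _

lemma quad_le_of_psd {M : Matrix V V ℝ} {c : ℝ} (h : ((c • (1 : Matrix V V ℝ)) - M).PosSemidef)
    (x : V → ℝ) : x ⬝ᵥ M.mulVec x ≤ c * (x ⬝ᵥ x) := by
  have h2 := h.dotProduct_mulVec_nonneg x
  have hs : star x = x := by funext i; simp
  rw [hs, Matrix.sub_mulVec, Matrix.smul_mulVec, Matrix.one_mulVec, dotProduct_sub,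
    dotProduct_smul] at h2
  simp only [smul_eq_mul] at h2
  linarith

lemma isGreatest_eigSet [Nonempty V] {M : Matrix V V ℝ} (hM : M.IsHermitian) :
    IsGreatest (eigSet M) (sSup (eigSet M)) := by
  obtain ⟨j0, -, hj0⟩ := Finset.exists_mem_eq_sup' (Finset.univ_nonempty (α := V)) hM.eigenvalues
  set c := Finset.univ.sup' Finset.univ_nonempty hM.eigenvalues with hcdef
  have hc : ∀ j, hM.eigenvalues j ≤ c := fun j => Finset.le_sup' _ (Finset.mem_univ j)
  have hpsd := psd_of_le hM hc
  have hub : ∀ μ ∈ eigSet M, μ ≤ c := by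
    rintro μ ⟨x, hx, hxe⟩
    have h1 : x ⬝ᵥ M.mulVec x = μ * (x ⬝ᵥ x) := by rw [hxe, dotProduct_smul, smul_eq_mul]
    have h2 := quad_le_of_psd hpsd x
    nlinarith [dot_self_pos hx]
  have hg : IsGreatest (eigSet M) c := ⟨hj0 ▸ mem_eigSet hM j0, hub⟩
  rwa [hg.csSup_eq]

lemma sSup_eigSet_lt [Nonempty V] {A B : Matrix V V ℝ}
    (hA : A.IsHermitian) (hB : B.IsHermitian)
    (hA0 : ∀ i j, 0 ≤ A i j) (hAB : ∀ i j, A i j ≤ B i j)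
    (hBoff : ∀ i j, i ≠ j → 1 ≤ B i j)
    (hlt : ∃ i j, A i j < B i j) :
    sSup (eigSet A) < sSup (eigSet B) := by
  have hB0 : ∀ i j, 0 ≤ B i j := fun i j => (hA0 i j).trans (hAB i j)
  obtain ⟨gB, gBub⟩ := isGreatest_eigSet hB
  obtain ⟨gA, gAub⟩ := isGreatest_eigSet hA
  set α := sSup (eigSet A) with hα
  set β := sSup (eigSet B) with hβ
  obtain ⟨x, hx0, hxe⟩ := gA
  set y : V → ℝ := fun i => |x i| with hy
  have hy0 : y ≠ 0 := by
    intro h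
    apply hx0
    funext i
    have h1 := congrFun h i
    simp only [hy, Pi.zero_apply] at h1 ⊢
    exact abs_eq_zero.mp h1
  have hyy : y ⬝ᵥ y = x ⬝ᵥ x :=
    Finset.sum_congr rfl fun i _ => by simp [hy, abs_mul_abs_self]
  have hxx : 0 < x ⬝ᵥ x := dot_self_pos hx0
  have hxAx : x ⬝ᵥ A.mulVec x = α * (x ⬝ᵥ x) := by
    rw [hxe, dotProduct_smul, smul_eq_mul]
  have hyge : ∀ i, 0 ≤ y i := fun i => abs_nonneg _
  have hq1 : x ⬝ᵥ A.mulVec x ≤ y ⬝ᵥ A.mulVec y := by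
    rw [quad_eq, quad_eq]
    refine Finset.sum_le_sum fun i _ => Finset.sum_le_sum fun j _ => ?_
    have h1 : x i * x j ≤ |x i| * |x j| := (le_abs_self _).trans (le_of_eq (abs_mul _ _))
    have h2 := hA0 i j
    have h3 : y i = |x i| := rfl
    have h4 : y j = |x j| := rfl
    rw [h3, h4]
    nlinarith
  have hq2 : y ⬝ᵥ A.mulVec y ≤ y ⬝ᵥ B.mulVec y := by
    rw [quad_eq, quad_eq]
    refine Finset.sum_le_sum fun i _ => Finset.sum_le_sum fun j _ => ?_
    nlinarith [hAB i j, mul_nonneg (hyge i) (hyge j)]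
  have hBpsd := psd_of_le hB (fun j => gBub (mem_eigSet hB j))
  have hq3 : y ⬝ᵥ B.mulVec y ≤ β * (y ⬝ᵥ y) := quad_le_of_psd hBpsd y
  rw [hyy] at hq3
  have weak : α ≤ β := by nlinarith
  rcases weak.lt_or_eq with hfin | heq
  · exact hfin
  · exfalso
    rw [heq] at hxAx
    have e3 : y ⬝ᵥ B.mulVec y = β * (x ⬝ᵥ x) := le_antisymm hq3 (by linarith)
    have e2 : y ⬝ᵥ A.mulVec y = y ⬝ᵥ B.mulVec y := le_antisymm hq2 (by linarith)
    have hker : (β • (1 : Matrix V V ℝ) - B).mulVec y = 0 := by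
      apply (hBpsd.dotProduct_mulVec_zero_iff y).mp
      have hsy : star y = y := by funext i; simp
      rw [hsy, Matrix.sub_mulVec, Matrix.smul_mulVec, Matrix.one_mulVec, dotProduct_sub,
        dotProduct_smul]
      simp only [smul_eq_mul]
      rw [hyy]
      linarith
    have hBy : B.mulVec y = β • y := by
      rw [Matrix.sub_mulVec, Matrix.smul_mulVec, Matrix.one_mulVec, sub_eq_zero] at hker
      exact hker.symm
    have hypos : ∀ i, 0 < y i := by
      intro i
      rcases (hyge i).lt_or_eq with h | h
      · exact h
      · exfalso
        have hz : (B.mulVec y) i = 0 := by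
          rw [hBy]
          simp [Pi.smul_apply, ← h]
        have hterms : ∀ j ∈ Finset.univ, 0 ≤ B i j * y j :=
          fun j _ => mul_nonneg (hB0 i j) (hyge j)
        have hsum : ∑ j, B i j * y j = 0 := by
          simpa [Matrix.mulVec, dotProduct] using hz
        have hzero := (Finset.sum_eq_zero_iff_of_nonneg hterms).mp hsum
        apply hy0
        funext j
        simp only [Pi.zero_apply]
        by_cases hji : j = i
        · rw [hji, ← h]
        · have h1 := hzero j (Finset.mem_univ j)
          have h2 := hBoff i j (fun hh => hji hh.symm)
          have h3 := hyge j
          nlinarith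
    obtain ⟨i0, j0, hij⟩ := hlt
    have hstrict : y ⬝ᵥ A.mulVec y < y ⬝ᵥ B.mulVec y := by
      rw [quad_eq, quad_eq]
      refine Finset.sum_lt_sum
        (fun i _ => Finset.sum_le_sum fun j _ =>
          by nlinarith [hAB i j, mul_nonneg (hyge i) (hyge j)])
        ⟨i0, Finset.mem_univ _, ?_⟩
      refine Finset.sum_lt_sum
        (fun j _ => by nlinarith [hAB i0 j, mul_nonneg (hyge i0) (hyge j)])
        ⟨j0, Finset.mem_univ _, ?_⟩
      nlinarith [mul_pos (hypos i0) (hypos j0)]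
    linarith

lemma eigSet_pull_sub {W : Type*} [Fintype W] [DecidableEq W] (φ : V ≃ W) (M : Matrix W W ℝ) :
    eigSet M ⊆ eigSet (Matrix.of fun a b => M (φ a) (φ b)) := by
  rintro μ ⟨x, hx0, hxe⟩
  refine ⟨fun a => x (φ a), ?_, ?_⟩
  · intro h
    apply hx0
    funext w
    have h1 := congrFun h (φ.symm w)
    simpa using h1
  · funext a
    have h1 := congrFun hxe (φ a)
    simp only [Matrix.mulVec, dotProduct, Pi.smul_apply, smul_eq_mul] at h1 ⊢
    rw [← Equiv.sum_comp φ (fun w => M (φ a) w * x w)] at h1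
    simpa using h1

lemma eigSet_pull {W : Type*} [Fintype W] [DecidableEq W] (φ : V ≃ W) (M : Matrix W W ℝ) :
    eigSet (Matrix.of fun a b => M (φ a) (φ b)) = eigSet M := by
  refine Set.Subset.antisymm ?_ (eigSet_pull_sub φ M)
  intro μ hμ
  have h2 := eigSet_pull_sub φ.symm (Matrix.of fun a b => M (φ a) (φ b)) hμ
  have h3 : (Matrix.of fun (a b : W) =>
      (Matrix.of fun c d => M (φ c) (φ d)) (φ.symm a) (φ.symm b)) = M := by
    ext a b
    simp
  rwa [h3] at h2

lemma iso_dist {W : Type*} {G : SimpleGraph V} {H : SimpleGraph W} (e : G ≃g H) (a b : V) :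
    H.dist (e a) (e b) = G.dist a b := by
  by_cases h : G.Reachable a b
  · refine le_antisymm ?_ ?_
    · obtain ⟨p, hp⟩ := h.exists_walk_length_eq_dist
      calc H.dist (e a) (e b) ≤ (p.map e.toHom).length := SimpleGraph.dist_le _
        _ = G.dist a b := by rw [SimpleGraph.Walk.length_map, hp]
    · have h' : H.Reachable (e a) (e b) := Iso.reachable_iff.mpr h
      obtain ⟨q, hq⟩ := h'.exists_walk_length_eq_dist
      calc G.dist a b ≤ ((q.map e.symm.toHom).copy (by simp) (by simp)).length :=
            SimpleGraph.dist_le _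
        _ = H.dist (e a) (e b) := by
            rw [SimpleGraph.Walk.length_copy, SimpleGraph.Walk.length_map, hq]
  · have h' : ¬H.Reachable (e a) (e b) := fun hr => h (Iso.reachable_iff.mp hr)
    rw [SimpleGraph.dist_eq_zero_of_not_reachable h,
      SimpleGraph.dist_eq_zero_of_not_reachable h']

end Stmt2Aux
namespace Stmt2Aux
open Matrix SimpleGraph

lemma distMatrix_isHermitian {V : Type*} [Fintype V] (G : SimpleGraph V) :
    (distMatrix G).IsHermitian := by
  have h : (distMatrix G)ᴴ = distMatrix G := by
    ext i j
    simp [distMatrix, Matrix.conjTranspose_apply, SimpleGraph.dist_comm]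
  exact h

lemma lam1_eq {V : Type*} [Fintype V] (G : SimpleGraph V) :
    lam1 G = sSup (eigSet (distMatrix G)) := rfl

lemma lam1_comap {V W : Type*} [Fintype V] [DecidableEq V] [Fintype W] [DecidableEq W]
    (φ : V ≃ W) (H : SimpleGraph W) :
    lam1 (H.comap φ) = lam1 H := by
  have e : H.comap φ ≃g H := SimpleGraph.Iso.comap φ H
  have hmat : distMatrix (H.comap φ) = Matrix.of fun a b => (distMatrix H) (φ a) (φ b) := by
    ext a b
    simp only [distMatrix, Matrix.of_apply]
    norm_cast
    have h2 := (iso_dist (SimpleGraph.Iso.comap φ H) a b).symm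
    simpa using h2
  rw [lam1_eq, lam1_eq, hmat, eigSet_pull]

lemma Hc_adj (s t : ℕ) (i j : Fin (s + t + 2)) :
    (Hgraph s t)ᶜ.Adj i j ↔
      (i.val = s + t ∧ j.val = s + t + 1) ∨ (j.val = s + t ∧ i.val = s + t + 1) ∨
      (i.val = s + t ∧ s ≤ j.val ∧ j.val < s + t) ∨ (j.val = s + t ∧ s ≤ i.val ∧ i.val < s + t) ∨
      (i.val = s + t + 1 ∧ j.val < s) ∨ (j.val = s + t + 1 ∧ i.val < s) := by
  have hi := i.isLt
  have hj := j.isLt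
  have hij : (i = j) ↔ (i.val = j.val) := Fin.val_eq_val i j |>.symm
  simp only [SimpleGraph.compl_adj, Hgraph, SimpleGraph.fromRel_adj, ne_eq, hij]
  omega

lemma Hc_conn (s t : ℕ) : ((Hgraph s t)ᶜ).Connected := by
  rw [SimpleGraph.connected_iff]
  constructor
  · have hub : ∀ a : Fin (s + t + 2), ((Hgraph s t)ᶜ).Reachable a ⟨s + t, by omega⟩ := by
      intro a
      have ha := a.isLt
      by_cases h1 : a.val = s + t
      · have h2 : a = ⟨s + t, by omega⟩ := Fin.ext h1
        rw [h2]
      · by_cases h2 : a.val = s + t + 1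
        · exact SimpleGraph.Adj.reachable ((Hc_adj s t _ _).mpr (by simp [h2]; all_goals omega))
        · by_cases h3 : a.val < s
          · refine SimpleGraph.Reachable.trans
              (SimpleGraph.Adj.reachable (v := (⟨s + t + 1, by omega⟩ : Fin (s + t + 2)))
                ((Hc_adj s t _ _).mpr (by simp; all_goals omega)))
              (SimpleGraph.Adj.reachable ((Hc_adj s t _ _).mpr (by simp; all_goals omega)))
          · exact SimpleGraph.Adj.reachable ((Hc_adj s t _ _).mpr (by simp; all_goals omega))
    exact fun a b => (hub a).trans (hub b).symm
  · exact ⟨⟨s + t, by omega⟩⟩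

end Stmt2Aux
/-- For `G` connected on `n` vertices with `Gᶜ` connected, vertices `u, v`
with `d_G(u,v) > 3`, and positive `s, t` with `s + t = n - 2`, `s ≥ deg_G(u)`,
`t ≥ deg_G(v)`, one has `λ₁(Gᶜ) < λ₁(H(s,t)ᶜ)`. -/
theorem stmt_2 {V : Type*} [Fintype V] [DecidableEq V] (n : ℕ) (G : SimpleGraph V)
    [DecidableRel G.Adj] (hcard : Fintype.card V = n)
    (hconn : G.Connected) (hcc : Gᶜ.Connected)
    (u v : V) (huv : 3 < G.dist u v)
    (s t : ℕ) (hs : 0 < s) (ht : 0 < t) (hst : s + t = n - 2)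
    (hds : G.degree u ≤ s) (hdt : G.degree v ≤ t) :
    lam1 Gᶜ < lam1 (Hgraph s t)ᶜ := by
  classical
  open Stmt2Aux in
  have hr : G.Reachable u v := hconn.preconnected u v
  have hne_uv : u ≠ v := by
    intro h
    rw [h, SimpleGraph.dist_self] at huv
    omega
  have hnadj_uv : ¬G.Adj u v := by
    intro h
    have h1 := SimpleGraph.dist_eq_one_iff_adj.mpr h
    omega
  -- n ≥ 5
  obtain ⟨p, hp⟩ := hr.exists_walk_length_eq_dist
  have hbp : G.dist u v ≤ p.bypass.length := SimpleGraph.dist_le _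
  have hbl : p.bypass.length < Fintype.card V := p.bypass_isPath.length_lt
  rw [hcard] at hbl
  have hn5 : 5 ≤ n := by omega
  have hNE : Nonempty V := Fintype.card_pos_iff.mp (by omega)
  -- neighborhoods
  set Nu := G.neighborFinset u with hNu
  set Nv := G.neighborFinset v with hNv
  have hNucard : Nu.card = G.degree u := G.card_neighborFinset_eq_degree u
  have hNvcard : Nv.card = G.degree v := G.card_neighborFinset_eq_degree v
  have hcommon : ∀ x, G.Adj u x → G.Adj v x → False := by
    intro x h1 h2
    have d1 : G.dist u x = 1 := SimpleGraph.dist_eq_one_iff_adj.mpr h1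
    have d2 : G.dist x v = 1 := SimpleGraph.dist_eq_one_iff_adj.mpr h2.symm
    have h3 : G.dist u v ≤ G.dist u x + G.dist x v := hconn.dist_triangle
    omega
  set R : Finset V := Finset.univ \ {u, v} with hR
  have hRcard : R.card = n - 2 := by
    rw [hR, Finset.card_sdiff_of_subset (Finset.subset_univ _), Finset.card_univ, hcard]
    have h2 : ({u, v} : Finset V).card = 2 := by
      rw [Finset.card_insert_of_notMem (by simpa using hne_uv), Finset.card_singleton]
    omega
  have hNvR : Nv ⊆ R := by
    intro x hx
    rw [hNv, SimpleGraph.mem_neighborFinset] at hx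
    have hxv : x ≠ v := hx.ne'
    have hxu : x ≠ u := by
      rintro rfl
      exact hnadj_uv hx.symm
    rw [hR]
    simp [hxu, hxv]
  have hNuR : Nu ⊆ R \ Nv := by
    intro x hx
    rw [hNu, SimpleGraph.mem_neighborFinset] at hx
    have hxu : x ≠ u := hx.ne'
    have hxv : x ≠ v := by
      rintro rfl
      exact hnadj_uv hx
    rw [Finset.mem_sdiff]
    constructor
    · rw [hR]; simp [hxu, hxv]
    · rw [hNv, SimpleGraph.mem_neighborFinset]
      intro h2
      exact hcommon x hx h2
  have hRNvcard : (R \ Nv).card = n - 2 - Nv.card := by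
    rw [Finset.card_sdiff_of_subset hNvR, hRcard]
  obtain ⟨A, hNuA, hAsub, hAcard⟩ := Finset.exists_subsuperset_card_eq (n := s) hNuR
    (by rw [hNucard]; exact hds) (by rw [hRNvcard, hNvcard]; omega)
  set B := R \ A with hB
  have hAR : A ⊆ R := hAsub.trans Finset.sdiff_subset
  have hBcard : B.card = t := by
    rw [hB, Finset.card_sdiff_of_subset hAR, hRcard, hAcard]
    omega
  have hNvB : Nv ⊆ B := by
    intro x hx
    rw [hB, Finset.mem_sdiff]
    exact ⟨hNvR hx, fun hxA => (Finset.mem_sdiff.mp (hAsub hxA)).2 hx⟩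
  have huR : u ∉ R := by rw [hR]; simp
  have hvR : v ∉ R := by rw [hR]; simp
  have huA : u ∉ A := fun h => huR (hAR h)
  have hvA : v ∉ A := fun h => hvR (hAR h)
  have huB : u ∉ B := fun h => huR (Finset.mem_sdiff.mp h).1
  have hvB : v ∉ B := fun h => hvR (Finset.mem_sdiff.mp h).1
  set eA := A.equivFinOfCardEq hAcard with heA
  set eB := B.equivFinOfCardEq hBcard with heB
  set f : V → Fin (s + t + 2) := fun x =>
    if hx : x ∈ A then ⟨(eA ⟨x, hx⟩).val, by have := (eA ⟨x, hx⟩).isLt; omega⟩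
    else if hx' : x ∈ B then ⟨s + (eB ⟨x, hx'⟩).val, by have := (eB ⟨x, hx'⟩).isLt; omega⟩
    else if x = u then ⟨s + t, by omega⟩ else ⟨s + t + 1, by omega⟩
    with hf
  have hfA : ∀ x (hx : x ∈ A), (f x).val = (eA ⟨x, hx⟩).val := by
    intro x hx
    simp only [hf]
    rw [dif_pos hx]
  have hfB : ∀ x (hx : x ∉ A) (hx' : x ∈ B), (f x).val = s + (eB ⟨x, hx'⟩).val := by
    intro x hx hx'
    simp only [hf]
    rw [dif_neg hx, dif_pos hx']
  have hfu : (f u).val = s + t := by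
    simp only [hf]
    rw [dif_neg huA, dif_neg huB]
    simp
  have hfv : (f v).val = s + t + 1 := by
    simp only [hf]
    rw [dif_neg hvA, dif_neg hvB]
    simp [Ne.symm hne_uv]
  have hcover : ∀ x, x ∉ A → x ∉ B → x = u ∨ x = v := by
    intro x hxA hxB
    by_contra hc
    push_neg at hc
    have hxR : x ∈ R := by rw [hR]; simp [hc.1, hc.2]
    exact hxB (by rw [hB, Finset.mem_sdiff]; exact ⟨hxR, hxA⟩)
  have hrangeA : ∀ x, x ∈ A → (f x).val < s := by
    intro x hx
    rw [hfA x hx]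
    exact (eA ⟨x, hx⟩).isLt
  have hrangeB : ∀ x, x ∈ B → s ≤ (f x).val ∧ (f x).val < s + t := by
    intro x hx
    have hxA : x ∉ A := fun h => (Finset.mem_sdiff.mp hx).2 h
    rw [hfB x hxA hx]
    have := (eB ⟨x, hx⟩).isLt
    omega
  have hinj : Function.Injective f := by
    intro x y hxy
    have hval : (f x).val = (f y).val := by rw [hxy]
    by_cases hxA : x ∈ A
    · by_cases hyA : y ∈ A
      · have h1 : eA ⟨x, hxA⟩ = eA ⟨y, hyA⟩ :=
          Fin.ext (by rw [← hfA x hxA, ← hfA y hyA, hval])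
        exact congrArg Subtype.val (eA.injective h1)
      · exfalso
        have hx1 := hrangeA x hxA
        rw [hval] at hx1
        by_cases hyB : y ∈ B
        · have := hrangeB y hyB; omega
        · rcases hcover y hyA hyB with rfl | rfl
          · rw [hfu] at hx1; omega
          · rw [hfv] at hx1; omega
    · by_cases hxB : x ∈ B
      · by_cases hyA : y ∈ A
        · exfalso
          have h1 := hrangeB x hxB
          have h2 := hrangeA y hyA
          rw [hval] at h1
          omega
        · by_cases hyB : y ∈ B
          · have h1 : eB ⟨x, hxB⟩ = eB ⟨y, hyB⟩ := Fin.ext (by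
              have e1 := hfB x hxA hxB
              have e2 := hfB y hyA hyB
              rw [hval] at e1
              omega)
            exact congrArg Subtype.val (eB.injective h1)
          · exfalso
            have h1 := hrangeB x hxB
            rw [hval] at h1
            rcases hcover y hyA hyB with rfl | rfl
            · rw [hfu] at h1; omega
            · rw [hfv] at h1; omega
      · rcases hcover x hxA hxB with rfl | rfl
        · by_cases hyA : y ∈ A
          · exfalso
            have h1 := hrangeA y hyA
            rw [← hval, hfu] at h1
            omega
          · by_cases hyB : y ∈ B
            · exfalso
              have h1 := hrangeB y hyB
              rw [← hval, hfu] at h1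
              omega
            · rcases hcover y hyA hyB with rfl | h2
              · rfl
              · exfalso
                rw [hfu, h2, hfv] at hval
                omega
        · by_cases hyA : y ∈ A
          · exfalso
            have h1 := hrangeA y hyA
            rw [← hval, hfv] at h1
            omega
          · by_cases hyB : y ∈ B
            · exfalso
              have h1 := hrangeB y hyB
              rw [← hval, hfv] at h1
              omega
            · rcases hcover y hyA hyB with h2 | rfl
              · exfalso
                rw [hfv, h2, hfu] at hval
                omega
              · rfl
  have hbij : Function.Bijective f := (Fintype.bijective_iff_injective_and_card f).mpr
    ⟨hinj, by rw [hcard, Fintype.card_fin]; omega⟩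
  set φ : V ≃ Fin (s + t + 2) := Equiv.ofBijective f hbij with hφ
  set HC := (Hgraph s t)ᶜ with hHC
  set T' : SimpleGraph V := SimpleGraph.comap φ HC with hT'
  have e : T' ≃g HC := SimpleGraph.Iso.comap φ HC
  have hT'adj : ∀ a b, T'.Adj a b ↔ HC.Adj (f a) (f b) := fun a b => Iff.rfl
  have hT'conn : T'.Connected := (SimpleGraph.Iso.connected_iff e).mpr (Hc_conn s t)
  have hT'dist : ∀ a b, T'.dist a b = HC.dist (f a) (f b) := by
    intro a b
    have h2 := (iso_dist (SimpleGraph.Iso.comap φ HC) a b).symm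
    exact h2
  have hvalu : ∀ x, (f x).val = s + t → x = u := by
    intro x hx
    apply hinj
    exact Fin.ext (by rw [hx, hfu])
  have hvalv : ∀ x, (f x).val = s + t + 1 → x = v := by
    intro x hx
    apply hinj
    exact Fin.ext (by rw [hx, hfv])
  have hle : T' ≤ Gᶜ := by
    intro a b hab
    rw [hT'adj] at hab
    rw [SimpleGraph.compl_adj]
    refine ⟨fun h => hab.ne (by rw [h]), ?_⟩
    intro hGadj
    rcases (Hc_adj s t (f a) (f b)).mp hab with h | h | h | h | h | h
    · have ha := hvalu a h.1
      have hb := hvalv b h.2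
      rw [ha, hb] at hGadj
      exact hnadj_uv hGadj
    · have ha := hvalv a h.2
      have hb := hvalu b h.1
      rw [ha, hb] at hGadj
      exact hnadj_uv hGadj.symm
    · have ha := hvalu a h.1
      subst ha
      have hbNu : b ∈ Nu := by rw [hNu, SimpleGraph.mem_neighborFinset]; exact hGadj
      have h2 := hrangeA b (hNuA hbNu)
      omega
    · have hb := hvalu b h.1
      subst hb
      have haNu : a ∈ Nu := by rw [hNu, SimpleGraph.mem_neighborFinset]; exact hGadj.symm
      have h2 := hrangeA a (hNuA haNu)
      omega
    · have ha := hvalv a h.1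
      subst ha
      have hbNv : b ∈ Nv := by rw [hNv, SimpleGraph.mem_neighborFinset]; exact hGadj
      have h2 := hrangeB b (hNvB hbNv)
      omega
    · have hb := hvalv b h.1
      subst hb
      have haNv : a ∈ Nv := by rw [hNv, SimpleGraph.mem_neighborFinset]; exact hGadj.symm
      have h2 := hrangeB a (hNvB haNv)
      omega
  have hpair : ∃ a b, (distMatrix Gᶜ) a b < (distMatrix T') a b := by
    by_cases hGT : Gᶜ = T'
    · exfalso
      have hGeq : G = T'ᶜ := by rw [← hGT, compl_compl]
      set a0 := φ.symm ⟨0, by omega⟩ with ha0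
      set b0 := φ.symm ⟨s, by omega⟩ with hb0
      have hfa0 : (f a0).val = 0 := by
        have h1 : φ a0 = ⟨0, by omega⟩ := φ.apply_symm_apply _
        have h2 : (φ a0).val = 0 := by rw [h1]
        exact h2
      have hfb0 : (f b0).val = s := by
        have h1 : φ b0 = ⟨s, by omega⟩ := φ.apply_symm_apply _
        have h2 : (φ b0).val = s := by rw [h1]
        exact h2
      have hadj1 : G.Adj u a0 := by
        rw [hGeq, SimpleGraph.compl_adj]
        constructor
        · intro h
          rw [← h, hfu] at hfa0
          omega
        · rw [hT'adj]
          intro hadj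
          rcases (Hc_adj s t (f u) (f a0)).mp hadj with h | h | h | h | h | h <;> omega
      have hadj2 : G.Adj a0 b0 := by
        rw [hGeq, SimpleGraph.compl_adj]
        constructor
        · intro h
          rw [h, hfb0] at hfa0
          omega
        · rw [hT'adj]
          intro hadj
          rcases (Hc_adj s t (f a0) (f b0)).mp hadj with h | h | h | h | h | h <;> omega
      have hadj3 : G.Adj b0 v := by
        rw [hGeq, SimpleGraph.compl_adj]
        constructor
        · intro h
          rw [h, hfv] at hfb0
          omega
        · rw [hT'adj]
          intro hadj
          rcases (Hc_adj s t (f b0) (f v)).mp hadj with h | h | h | h | h | h <;> omega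
      have hwalk : G.dist u v ≤ 3 := by
        have hw := SimpleGraph.dist_le
          (SimpleGraph.Walk.cons hadj1 (SimpleGraph.Walk.cons hadj2
            (SimpleGraph.Walk.cons hadj3 SimpleGraph.Walk.nil)))
        simpa using hw
      omega
    · have hex : ∃ a b, Gᶜ.Adj a b ∧ ¬T'.Adj a b := by
        by_contra hcon
        push_neg at hcon
        have hle2 : Gᶜ ≤ T' := fun a b hab => hcon a b hab
        exact hGT (le_antisymm hle2 hle)
      obtain ⟨a, b, hab, hnab⟩ := hex
      refine ⟨a, b, ?_⟩
      simp only [distMatrix, Matrix.of_apply]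
      have h1 : Gᶜ.dist a b = 1 := SimpleGraph.dist_eq_one_iff_adj.mpr hab
      have h2 : 1 < T'.dist a b := by
        have hp2 := hT'conn.pos_dist_of_ne hab.ne
        have h3 : T'.dist a b ≠ 1 := fun h => hnab (SimpleGraph.dist_eq_one_iff_adj.mp h)
        omega
      rw [h1]
      exact_mod_cast h2
  have hherm1 : (distMatrix Gᶜ).IsHermitian := distMatrix_isHermitian _
  have hherm2 : (distMatrix T').IsHermitian := distMatrix_isHermitian _
  have hA0 : ∀ a b, 0 ≤ (distMatrix Gᶜ) a b := by
    intro a b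
    simp only [distMatrix, Matrix.of_apply]
    positivity
  have hAB : ∀ a b, (distMatrix Gᶜ) a b ≤ (distMatrix T') a b := by
    intro a b
    simp only [distMatrix, Matrix.of_apply, Nat.cast_le]
    exact SimpleGraph.Reachable.dist_anti hle (hT'conn.preconnected a b)
  have hBoff : ∀ a b, a ≠ b → 1 ≤ (distMatrix T') a b := by
    intro a b hab
    simp only [distMatrix, Matrix.of_apply]
    exact_mod_cast hT'conn.pos_dist_of_ne hab
  have hmain : sSup (eigSet (distMatrix Gᶜ)) < sSup (eigSet (distMatrix T')) :=
    sSup_eigSet_lt hherm1 hherm2 hA0 hAB hBoff hpair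
  calc lam1 Gᶜ = sSup (eigSet (distMatrix Gᶜ)) := rfl
    _ < sSup (eigSet (distMatrix T')) := hmain
    _ = lam1 T' := rfl
    _ = lam1 HC := lam1_comap φ HC
end

section
/- Let n ≥ 5 and let s, t be positive integers with s + t = n - 2. Then λ1(H^c(s,t)) ≤ λ1(H^c(⌊n/2⌋ - 1, ⌈n/2⌉ - 1)), with equality if and only if {s, t} = {⌊n/2⌋ - 1, ⌈n/2⌉ - 1} (equivalently, H(s,t) is isomorphic to H(⌊n/2⌋ - 1, ⌈n/2⌉ - 1)). -/
open SimpleGraph Finset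

/-- char poly of quotient matrix, depends only on m = a+b and P = ab -/
noncomputable def qpoly (m P : ℕ) (x : ℝ) : ℝ :=
  x^4 + (4 - 2*(m:ℝ))*x^3 + (3 - 9*(m:ℝ) - 5*(P:ℝ))*x^2
    + (-4 - 12*(m:ℝ) - 4*(P:ℝ))*x + (-4 - 4*(m:ℝ))

noncomputable def lamStar (m P : ℕ) : ℝ := sSup {x : ℝ | qpoly m P x = 0}

lemma qpoly_cont (m P : ℕ) : Continuous (qpoly m P) := by
  unfold qpoly; fun_prop

noncomputable def qbound (m P : ℕ) : ℝ := 1 + ((4 + 2*(m:ℝ)) + (3 + 9*m + 5*P) + (4 + 12*m + 4*P) + (4 + 4*m))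

lemma qbound_pos (m P : ℕ) : 1 ≤ qbound m P := by
  unfold qbound
  have h1 : (0:ℝ) ≤ m := Nat.cast_nonneg m
  have h2 : (0:ℝ) ≤ P := Nat.cast_nonneg P
  nlinarith

lemma qpoly_pos (m P : ℕ) {x : ℝ} (hx : qbound m P ≤ x) : 0 < qpoly m P x := by
  have hm : (0:ℝ) ≤ m := Nat.cast_nonneg m
  have hP : (0:ℝ) ≤ P := Nat.cast_nonneg P
  have h1 : (1:ℝ) ≤ x := le_trans (qbound_pos m P) hx
  have hS : (4 + 2*(m:ℝ)) + (3 + 9*m + 5*P) + (4 + 12*m + 4*P) + (4 + 4*m) ≤ x - 1 := by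
    unfold qbound at hx; linarith
  have hx3 : (1:ℝ) ≤ x^3 := one_le_pow₀ h1
  have hxx : x ≤ x^3 := by nlinarith [sq_nonneg x, sq_nonneg (x-1)]
  have hx2 : x^2 ≤ x^3 := by nlinarith [sq_nonneg x]
  unfold qpoly
  nlinarith [mul_le_mul_of_nonneg_left hS (le_trans zero_le_one hx3 : (0:ℝ) ≤ x^3)]

lemma qpoly_zero_neg (m P : ℕ) : qpoly m P 0 < 0 := by
  have hm : (0:ℝ) ≤ m := Nat.cast_nonneg m
  unfold qpoly; nlinarith

lemma qpoly_root_exists (m P : ℕ) : ∃ x, 0 < x ∧ qpoly m P x = 0 := by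
  have h0 : qpoly m P 0 ≤ 0 := le_of_lt (qpoly_zero_neg m P)
  have hR : (0:ℝ) ≤ qpoly m P (qbound m P) := le_of_lt (qpoly_pos m P le_rfl)
  have hle : (0:ℝ) ≤ qbound m P := le_trans zero_le_one (qbound_pos m P)
  have := intermediate_value_Icc hle (qpoly_cont m P).continuousOn
  have hmem : (0:ℝ) ∈ Set.Icc (qpoly m P 0) (qpoly m P (qbound m P)) := ⟨h0, hR⟩
  obtain ⟨x, hxI, hx0⟩ := this hmem
  refine ⟨x, ?_, hx0⟩
  rcases lt_or_eq_of_le hxI.1 with h | h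
  · exact h
  · exfalso; rw [← h] at hx0; exact absurd hx0 (ne_of_lt (qpoly_zero_neg m P))

lemma qpoly_roots_bddAbove (m P : ℕ) : BddAbove {x : ℝ | qpoly m P x = 0} := by
  refine ⟨qbound m P, fun x hx => ?_⟩
  by_contra h
  push_neg at h
  exact absurd hx (ne_of_gt (qpoly_pos m P (le_of_lt h)))

lemma qpoly_roots_nonempty (m P : ℕ) : {x : ℝ | qpoly m P x = 0}.Nonempty := by
  obtain ⟨x, _, hx⟩ := qpoly_root_exists m P; exact ⟨x, hx⟩

lemma lamStar_root (m P : ℕ) : qpoly m P (lamStar m P) = 0 := by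
  have hcl : IsClosed {x : ℝ | qpoly m P x = 0} := isClosed_eq (qpoly_cont m P) continuous_const
  exact hcl.csSup_mem (qpoly_roots_nonempty m P) (qpoly_roots_bddAbove m P)

lemma le_lamStar (m P : ℕ) {x : ℝ} (hx : qpoly m P x = 0) : x ≤ lamStar m P :=
  le_csSup (qpoly_roots_bddAbove m P) hx

lemma lamStar_pos (m P : ℕ) : 0 < lamStar m P := by
  obtain ⟨x, hx0, hx⟩ := qpoly_root_exists m P
  exact lt_of_lt_of_le hx0 (le_lamStar m P hx)

lemma lamStar_lt_of_lt (m : ℕ) {P P' : ℕ} (h : P < P') : lamStar m P < lamStar m P' := by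
  set L := lamStar m P with hL
  have hroot : qpoly m P L = 0 := lamStar_root m P
  have hLpos : 0 < L := lamStar_pos m P
  have hdiff : qpoly m P' L = qpoly m P L - ((P':ℝ) - P) * (5*L^2 + 4*L) := by
    unfold qpoly; ring
  have hPP : (0:ℝ) < (P':ℝ) - P := by
    have := (Nat.cast_lt (α := ℝ)).2 h; linarith
  have hneg : qpoly m P' L < 0 := by
    rw [hdiff, hroot]; nlinarith
  -- find root of qpoly m P' above L
  set R := max L (qbound m P') with hR
  have hLR : L ≤ R := le_max_left _ _
  have hRpos : 0 < qpoly m P' R := qpoly_pos m P' (le_max_right _ _)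
  obtain ⟨x, hxI, hx0⟩ := intermediate_value_Icc hLR (qpoly_cont m P').continuousOn
    ⟨le_of_lt hneg, le_of_lt hRpos⟩
  have hxL : L < x := by
    rcases lt_or_eq_of_le hxI.1 with hlt | heq
    · exact hlt
    · exfalso; rw [← heq] at hx0; exact absurd hx0 (ne_of_lt hneg)
  exact lt_of_lt_of_le hxL (le_lamStar m P' hx0)

lemma lamStar_le_iff (m : ℕ) {P P' : ℕ} : lamStar m P ≤ lamStar m P' ↔ P ≤ P' := by
  constructor
  · intro h; by_contra hc; push_neg at hc
    exact absurd h (not_le.2 (lamStar_lt_of_lt m hc))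
  · intro h
    rcases lt_or_eq_of_le h with h | h
    · exact le_of_lt (lamStar_lt_of_lt m h)
    · rw [h]

lemma lamStar_eq_iff (m : ℕ) {P P' : ℕ} : lamStar m P = lamStar m P' ↔ P = P' := by
  constructor
  · intro h
    have h1 := (lamStar_le_iff m).1 (le_of_eq h)
    have h2 := (lamStar_le_iff m).1 (le_of_eq h.symm)
    omega
  · rintro rfl; rfl

lemma prod_max (n s t : ℕ) (hn : 5 ≤ n) (hs : 0 < s) (ht : 0 < t) (hst : s + t = n - 2) :
    s * t ≤ (n / 2 - 1) * ((n + 1) / 2 - 1) ∧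
    (s * t = (n / 2 - 1) * ((n + 1) / 2 - 1) ↔
      (s = n / 2 - 1 ∧ t = (n + 1) / 2 - 1) ∨ (s = (n + 1) / 2 - 1 ∧ t = n / 2 - 1)) := by
  set a := n / 2 - 1 with ha
  set b := (n + 1) / 2 - 1 with hb
  have hab : a + b = n - 2 := by omega
  have key : ∀ x y u v : ℤ, x + y = u + v → 4*(u*v) - 4*(x*y) = (x-y)^2 - (u-v)^2 := by
    intro x y u v h
    have hv : v = x + y - u := by linarith
    subst hv; ring
  have hkey : 4*((a:ℤ)*b) - 4*((s:ℤ)*t) = ((s:ℤ)-t)^2 - ((a:ℤ)-b)^2 := by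
    apply key; push_cast; omega
  have hd : ((a:ℤ) - b)^2 ≤ ((s:ℤ) - t)^2 ∧
      (((a:ℤ) - b)^2 = ((s:ℤ) - t)^2 ↔ ((s:ℤ) = a ∧ (t:ℤ) = b) ∨ ((s:ℤ) = b ∧ (t:ℤ) = a)) := by
    have hab1 : (a:ℤ) - b = 0 ∨ (a:ℤ) - b = -1 := by omega
    have hpar : ((s:ℤ) - t) - ((a:ℤ) - b) = 2*((s:ℤ) - a) := by
      have : (s:ℤ) + t = (a:ℤ) + b := by push_cast; omega
      linarith
    constructor
    · rcases hab1 with h | h <;> rw [h]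
      · nlinarith [sq_nonneg ((s:ℤ)-t)]
      · have hd1 : (s:ℤ) - t ≤ -1 ∨ 1 ≤ (s:ℤ) - t := by omega
        rcases hd1 with h1 | h1 <;> nlinarith
    · constructor
      · intro h
        have h2 : ((a:ℤ)-b - ((s:ℤ)-t)) * ((a:ℤ)-b + ((s:ℤ)-t)) = 0 := by nlinarith [h]
        rcases mul_eq_zero.1 h2 with h3 | h3 <;> omega
      · intro h; rcases h with ⟨h1, h2⟩ | ⟨h1, h2⟩ <;> rw [h1, h2] <;> ring
  constructor
  · have := hd.1
    have h4 : 4*((s:ℤ)*t) ≤ 4*((a:ℤ)*b) := by omega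
    have : (s:ℤ)*t ≤ (a:ℤ)*b := by linarith
    exact_mod_cast this
  · constructor
    · intro h
      have h' : ((s:ℤ))*t = (a:ℤ)*b := by exact_mod_cast h
      have : ((a:ℤ) - b)^2 = ((s:ℤ) - t)^2 := by omega
      have := hd.2.1 this
      rcases this with ⟨h1, h2⟩ | ⟨h1, h2⟩
      · left; constructor <;> omega
      · right; constructor <;> omega
    · intro h
      rcases h with ⟨h1, h2⟩ | ⟨h1, h2⟩ <;> rw [h1, h2] <;> ring

/-- class of a vertex: 0 = pendant at v (val < s), 1 = pendant at u (s ≤ val < s+t),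
2 = u (val = s+t), 3 = v (val = s+t+1) -/
def clsv (s t k : ℕ) : ℕ :=
  if k < s then 0 else if k < s + t then 1 else if k = s + t then 2 else 3

/-- distance table between classes -/
def dtab (c d : ℕ) : ℕ :=
  match c, d with
  | 0, 0 => 2 | 0, 1 => 3 | 0, 2 => 2 | 0, 3 => 1
  | 1, 0 => 3 | 1, 1 => 2 | 1, 2 => 1 | 1, 3 => 2
  | 2, 0 => 2 | 2, 1 => 1 | 2, 2 => 0 | 2, 3 => 1
  | 3, 0 => 1 | 3, 1 => 2 | 3, 2 => 1 | 3, 3 => 0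
  | _, _ => 0

lemma dtab00 : dtab 0 0 = 2 := rfl
lemma dtab01 : dtab 0 1 = 3 := rfl
lemma dtab02 : dtab 0 2 = 2 := rfl
lemma dtab03 : dtab 0 3 = 1 := rfl
lemma dtab10 : dtab 1 0 = 3 := rfl
lemma dtab11 : dtab 1 1 = 2 := rfl
lemma dtab12 : dtab 1 2 = 1 := rfl
lemma dtab13 : dtab 1 3 = 2 := rfl
lemma dtab20 : dtab 2 0 = 2 := rfl
lemma dtab21 : dtab 2 1 = 1 := rfl
lemma dtab22 : dtab 2 2 = 0 := rfl
lemma dtab23 : dtab 2 3 = 1 := rfl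
lemma dtab30 : dtab 3 0 = 1 := rfl
lemma dtab31 : dtab 3 1 = 2 := rfl
lemma dtab32 : dtab 3 2 = 1 := rfl
lemma dtab33 : dtab 3 3 = 0 := rfl

lemma Hc_adj (s t : ℕ) (i j : Fin (s + t + 2)) :
    (Hgraph s t)ᶜ.Adj i j ↔
      ((i.val = s + t ∧ j.val = s + t + 1) ∨ (j.val = s + t ∧ i.val = s + t + 1) ∨
       (i.val = s + t ∧ s ≤ j.val ∧ j.val < s + t) ∨ (j.val = s + t ∧ s ≤ i.val ∧ i.val < s + t) ∨
       (i.val = s + t + 1 ∧ j.val < s) ∨ (j.val = s + t + 1 ∧ i.val < s)) := by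
  have hi := i.isLt
  have hj := j.isLt
  simp only [SimpleGraph.compl_adj, Hgraph, SimpleGraph.fromRel_adj, ne_eq, Fin.ext_iff]
  omega

section distHelpers

variable {V : Type*} {G : SimpleGraph V} {i j : V}

lemma dist_two (hij : i ≠ j) (hadj : ¬G.Adj i j) {w : V} (h1 : G.Adj i w) (h2 : G.Adj w j) :
    G.dist i j = 2 := by
  have hle : G.dist i j ≤ 2 := by
    have := SimpleGraph.dist_le (SimpleGraph.Walk.cons h1 (SimpleGraph.Walk.cons h2 SimpleGraph.Walk.nil))
    simpa using this
  have hne0 : G.dist i j ≠ 0 := by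
    rw [SimpleGraph.dist_ne_zero_iff_ne_and_reachable]
    exact ⟨hij, ⟨SimpleGraph.Walk.cons h1 (SimpleGraph.Walk.cons h2 SimpleGraph.Walk.nil)⟩⟩
  have hne1 : G.dist i j ≠ 1 := by
    rw [ne_eq, SimpleGraph.dist_eq_one_iff_adj]; exact hadj
  omega

lemma walk_two_common (p : G.Walk i j) (hp : p.length = 2) : ∃ w, G.Adj i w ∧ G.Adj w j := by
  cases p with
  | nil => simp at hp
  | cons h q =>
    cases q with
    | nil => simp at hp
    | cons h' q' =>
      have hq : q'.length = 0 := by simp only [SimpleGraph.Walk.length_cons] at hp; omega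
      have := SimpleGraph.Walk.eq_of_length_eq_zero hq
      subst this
      exact ⟨_, h, h'⟩

lemma dist_three (hij : i ≠ j) (hadj : ¬G.Adj i j)
    (hcn : ∀ w, ¬(G.Adj i w ∧ G.Adj w j))
    {w1 w2 : V} (h1 : G.Adj i w1) (h2 : G.Adj w1 w2) (h3 : G.Adj w2 j) :
    G.dist i j = 3 := by
  have hle : G.dist i j ≤ 3 := by
    have := SimpleGraph.dist_le (SimpleGraph.Walk.cons h1 (SimpleGraph.Walk.cons h2
      (SimpleGraph.Walk.cons h3 SimpleGraph.Walk.nil)))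
    simpa using this
  have hne0 : G.dist i j ≠ 0 := by
    rw [SimpleGraph.dist_ne_zero_iff_ne_and_reachable]
    exact ⟨hij, ⟨SimpleGraph.Walk.cons h1 (SimpleGraph.Walk.cons h2
      (SimpleGraph.Walk.cons h3 SimpleGraph.Walk.nil))⟩⟩
  have hne1 : G.dist i j ≠ 1 := by
    rw [ne_eq, SimpleGraph.dist_eq_one_iff_adj]; exact hadj
  have hne2 : G.dist i j ≠ 2 := by
    intro h2d
    obtain ⟨p, hp⟩ := SimpleGraph.exists_walk_of_dist_ne_zero hne0
    rw [h2d] at hp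
    obtain ⟨w, hw1, hw2⟩ := walk_two_common p hp
    exact hcn w ⟨hw1, hw2⟩
  omega

end distHelpers

lemma clsv0 {s t k : ℕ} (h : k < s) : clsv s t k = 0 := by unfold clsv; rw [if_pos h]
lemma clsv1 {s t k : ℕ} (h1 : s ≤ k) (h2 : k < s + t) : clsv s t k = 1 := by
  unfold clsv; rw [if_neg (by omega), if_pos h2]
lemma clsv2 {s t k : ℕ} (h : k = s + t) : clsv s t k = 2 := by
  unfold clsv; rw [if_neg (by omega), if_neg (by omega), if_pos h]
lemma clsv3 {s t k : ℕ} (h : k = s + t + 1) : clsv s t k = 3 := by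
  unfold clsv; rw [if_neg (by omega), if_neg (by omega), if_neg (by omega)]

lemma Hc_dist {s t : ℕ} (hs : 0 < s) (ht : 0 < t) (i j : Fin (s + t + 2)) (hij : i ≠ j) :
    (Hgraph s t)ᶜ.dist i j = dtab (clsv s t i.val) (clsv s t j.val) := by
  set G := (Hgraph s t)ᶜ with hG
  have hadj : ∀ a b : Fin (s + t + 2), G.Adj a b ↔
      ((a.val = s + t ∧ b.val = s + t + 1) ∨ (b.val = s + t ∧ a.val = s + t + 1) ∨
       (a.val = s + t ∧ s ≤ b.val ∧ b.val < s + t) ∨ (b.val = s + t ∧ s ≤ a.val ∧ a.val < s + t) ∨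
       (a.val = s + t + 1 ∧ b.val < s) ∨ (b.val = s + t + 1 ∧ a.val < s)) := Hc_adj s t
  set u : Fin (s + t + 2) := ⟨s + t, by omega⟩ with hu
  set vv : Fin (s + t + 2) := ⟨s + t + 1, by omega⟩ with hvv
  have huval : u.val = s + t := rfl
  have hvval : vv.val = s + t + 1 := rfl
  have hi4 : i.val < s ∨ (s ≤ i.val ∧ i.val < s + t) ∨ i.val = s + t ∨ i.val = s + t + 1 := by
    have := i.isLt; omega
  have hj4 : j.val < s ∨ (s ≤ j.val ∧ j.val < s + t) ∨ j.val = s + t ∨ j.val = s + t + 1 := by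
    have := j.isLt; omega
  have hvalne : i.val ≠ j.val := fun h => hij (Fin.ext h)
  rcases hi4 with hi | hi | hi | hi <;> rcases hj4 with hj | hj | hj | hj
  · -- (0,0) dist 2 via vv
    rw [clsv0 hi, clsv0 hj]
    exact dist_two hij (fun h => by have := (hadj i j).1 h; omega)
      ((hadj i vv).2 (by omega)) ((hadj vv j).2 (by omega))
  · -- (0,1) dist 3 via vv, u
    rw [clsv0 hi, clsv1 hj.1 hj.2]
    refine dist_three hij (fun h => by have := (hadj i j).1 h; omega)
      (fun w hw => ?_)
      ((hadj i vv).2 (by omega)) ((hadj vv u).2 (by omega))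
      ((hadj u j).2 (by omega))
    have h1 := (hadj i w).1 hw.1
    have h2 := (hadj w j).1 hw.2
    omega
  · -- (0,2) dist 2 via vv
    rw [clsv0 hi, clsv2 hj]
    exact dist_two hij (fun h => by have := (hadj i j).1 h; omega)
      ((hadj i vv).2 (by omega)) ((hadj vv j).2 (by omega))
  · -- (0,3) dist 1
    rw [clsv0 hi, clsv3 hj]
    exact SimpleGraph.dist_eq_one_iff_adj.2 ((hadj i j).2 (by omega))
  · -- (1,0) dist 3 via u, vv
    rw [clsv1 hi.1 hi.2, clsv0 hj]
    refine dist_three hij (fun h => by have := (hadj i j).1 h; omega)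
      (fun w hw => ?_)
      ((hadj i u).2 (by omega)) ((hadj u vv).2 (by omega))
      ((hadj vv j).2 (by omega))
    have h1 := (hadj i w).1 hw.1
    have h2 := (hadj w j).1 hw.2
    omega
  · -- (1,1) dist 2 via u
    rw [clsv1 hi.1 hi.2, clsv1 hj.1 hj.2]
    exact dist_two hij (fun h => by have := (hadj i j).1 h; omega)
      ((hadj i u).2 (by omega)) ((hadj u j).2 (by omega))
  · -- (1,2) dist 1
    rw [clsv1 hi.1 hi.2, clsv2 hj]
    exact SimpleGraph.dist_eq_one_iff_adj.2 ((hadj i j).2 (by omega))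
  · -- (1,3) dist 2 via u
    rw [clsv1 hi.1 hi.2, clsv3 hj]
    exact dist_two hij (fun h => by have := (hadj i j).1 h; omega)
      ((hadj i u).2 (by omega)) ((hadj u j).2 (by omega))
  · -- (2,0)
    rw [clsv2 hi, clsv0 hj]
    exact dist_two hij (fun h => by have := (hadj i j).1 h; omega)
      ((hadj i vv).2 (by omega)) ((hadj vv j).2 (by omega))
  · -- (2,1)
    rw [clsv2 hi, clsv1 hj.1 hj.2]
    exact SimpleGraph.dist_eq_one_iff_adj.2 ((hadj i j).2 (by omega))
  · -- (2,2) impossible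
    exact absurd (Fin.ext (by omega)) hij
  · -- (2,3)
    rw [clsv2 hi, clsv3 hj]
    exact SimpleGraph.dist_eq_one_iff_adj.2 ((hadj i j).2 (by omega))
  · -- (3,0)
    rw [clsv3 hi, clsv0 hj]
    exact SimpleGraph.dist_eq_one_iff_adj.2 ((hadj i j).2 (by omega))
  · -- (3,1) dist 2 via u
    rw [clsv3 hi, clsv1 hj.1 hj.2]
    exact dist_two hij (fun h => by have := (hadj i j).1 h; omega)
      ((hadj i u).2 (by omega)) ((hadj u j).2 (by omega))
  · -- (3,2)
    rw [clsv3 hi, clsv2 hj]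
    exact SimpleGraph.dist_eq_one_iff_adj.2 ((hadj i j).2 (by omega))
  · -- (3,3) impossible
    exact absurd (Fin.ext (by omega)) hij


noncomputable def Dmat (s t : ℕ) : Matrix (Fin (s + t + 2)) (Fin (s + t + 2)) ℝ :=
  Matrix.of fun i j => if i = j then 0 else (dtab (clsv s t i.val) (clsv s t j.val) : ℝ)

lemma distMatrix_Hc (s t : ℕ) (hs : 0 < s) (ht : 0 < t) :
    distMatrix (Hgraph s t)ᶜ = Dmat s t := by
  ext i j
  simp only [distMatrix, Dmat, Matrix.of_apply]
  by_cases h : i = j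
  · subst h; simp [SimpleGraph.dist_self]
  · rw [if_neg h, Hc_dist hs ht i j h]

/-- sum over all vertices of a class function -/
lemma sum_clsv (s t : ℕ) (f : ℕ → ℝ) :
    ∑ j : Fin (s + t + 2), f (clsv s t j.val) =
      s * f 0 + t * f 1 + f 2 + f 3 := by
  rw [Fin.sum_univ_eq_sum_range (fun k => f (clsv s t k)) (s + t + 2)]
  rw [Finset.sum_range_succ, Finset.sum_range_succ]
  rw [← Finset.sum_range_add_sum_Ico _ (Nat.le_add_right s t)]
  have e0 : ∑ k ∈ Finset.range s, f (clsv s t k) = s * f 0 := by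
    rw [Finset.sum_congr rfl (fun k hk => by
      rw [clsv0 (Finset.mem_range.1 hk)])]
    simp [mul_comm]
  have e1 : ∑ k ∈ Finset.Ico s (s + t), f (clsv s t k) = t * f 1 := by
    rw [Finset.sum_congr rfl (fun k hk => by
      have := Finset.mem_Ico.1 hk
      rw [clsv1 this.1 this.2])]
    simp [Nat.card_Ico, mul_comm]
  rw [e0, e1, clsv2 rfl, clsv3 rfl]

lemma sum_offdiag {N : ℕ} (F G : Fin N → ℝ) (i : Fin N) (hFi : F i = 0)
    (h : ∀ j, j ≠ i → F j = G j) :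
    ∑ j, F j = (∑ j, G j) - G i := by
  have hF := Finset.add_sum_erase Finset.univ F (Finset.mem_univ i)
  have hG := Finset.add_sum_erase Finset.univ G (Finset.mem_univ i)
  have he : ∑ j ∈ Finset.univ.erase i, F j = ∑ j ∈ Finset.univ.erase i, G j :=
    Finset.sum_congr rfl (fun j hj => h j (Finset.ne_of_mem_erase hj))
  rw [← hF, ← hG, he, hFi]
  ring

lemma mulVec_cls (s t : ℕ) (g : ℕ → ℝ) (i : Fin (s + t + 2)) :
    (Dmat s t).mulVec (fun j => g (clsv s t j.val)) i =
      (s * ((dtab (clsv s t i.val) 0 : ℕ) : ℝ) * g 0 + t * (dtab (clsv s t i.val) 1 : ℕ) * g 1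
        + (dtab (clsv s t i.val) 2 : ℕ) * g 2 + (dtab (clsv s t i.val) 3 : ℕ) * g 3)
      - (dtab (clsv s t i.val) (clsv s t i.val) : ℕ) * g (clsv s t i.val) := by
  set c := clsv s t i.val with hc
  have : (Dmat s t).mulVec (fun j => g (clsv s t j.val)) i =
      ∑ j : Fin (s + t + 2), (if i = j then (0:ℝ) else (dtab c (clsv s t j.val) : ℝ)) *
        g (clsv s t j.val) := by
    simp [Matrix.mulVec, dotProduct, Dmat]; rfl
  rw [this]
  rw [sum_offdiag _ (fun j => (dtab c (clsv s t j.val) : ℝ) * g (clsv s t j.val)) i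
    (by simp) (fun j hj => by rw [if_neg (fun h => hj (h.symm))])]
  rw [sum_clsv s t (fun d => (dtab c d : ℝ) * g d)]
  ring


noncomputable def Mq (s t : ℕ) (μ : ℝ) : Matrix (Fin 4) (Fin 4) ℝ :=
  !![μ - (2*(s:ℝ) - 2), -(3*(t:ℝ)), -2, -1;
     -(3*(s:ℝ)), μ - (2*(t:ℝ) - 2), -1, -2;
     -(2*(s:ℝ)), -(t:ℝ), μ, -1;
     -(s:ℝ), -(2*(t:ℝ)), -1, μ]

lemma detMq (s t : ℕ) (μ : ℝ) : (Mq s t μ).det = qpoly (s+t) (s*t) μ := by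
  rw [Matrix.det_succ_row_zero]
  simp [Mq, qpoly, Fin.sum_univ_succ, Matrix.det_fin_three, Fin.succAbove]
  push_cast
  ring

lemma sum_pair {N : ℕ} (F : Fin N → ℝ) {i j : Fin N} (hij : i ≠ j)
    (h : ∀ k, k ≠ i → k ≠ j → F k = 0) : ∑ k, F k = F i + F j := by
  have hjmem : j ∈ Finset.univ.erase i := Finset.mem_erase.2 ⟨fun hh => hij hh.symm, Finset.mem_univ j⟩
  rw [← Finset.add_sum_erase Finset.univ F (Finset.mem_univ i),
      ← Finset.add_sum_erase _ F hjmem]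
  have : ∑ k ∈ (Finset.univ.erase i).erase j, F k = 0 :=
    Finset.sum_eq_zero fun k hk => by
      have h1 := Finset.ne_of_mem_erase hk
      have h2 := Finset.ne_of_mem_erase (Finset.mem_of_mem_erase hk)
      exact h k h2 h1
  rw [this]; ring

lemma clsv_cases (s t k : ℕ) : clsv s t k = 0 ∨ clsv s t k = 1 ∨ clsv s t k = 2 ∨ clsv s t k = 3 := by
  unfold clsv; split_ifs <;> simp

lemma clsv_eq_two {s t k : ℕ} (h : clsv s t k = 2) : k = s + t := by
  unfold clsv at h; split_ifs at h <;> omega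

lemma clsv_eq_three {s t k : ℕ} (h : clsv s t k = 3) (hk : k < s + t + 2) : k = s + t + 1 := by
  unfold clsv at h; split_ifs at h <;> omega

lemma eig_neg_two {s t : ℕ} {μ : ℝ} {x : Fin (s + t + 2) → ℝ}
    (hx : (Dmat s t).mulVec x = μ • x)
    {i j : Fin (s + t + 2)} (hcls : clsv s t i.val = clsv s t j.val) (hne : x i ≠ x j) :
    μ = -2 := by
  have hij : i ≠ j := fun h => hne (by rw [h])
  -- dtab c c = 2 where c = clsv i
  have hcc : dtab (clsv s t i.val) (clsv s t i.val) = 2 := by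
    rcases clsv_cases s t i.val with h | h | h | h
    · rw [h]; rfl
    · rw [h]; rfl
    · exfalso
      exact hij (Fin.ext ((clsv_eq_two h).trans (clsv_eq_two (hcls ▸ h)).symm))
    · exfalso
      exact hij (Fin.ext ((clsv_eq_three h i.isLt).trans
        (clsv_eq_three (hcls ▸ h) j.isLt).symm))
  have hi := congrFun hx i
  have hj := congrFun hx j
  simp only [Matrix.mulVec, dotProduct, Pi.smul_apply, smul_eq_mul, Dmat,
    Matrix.of_apply] at hi hj
  have hdiff : ∑ k, ((if i = k then (0:ℝ) else (dtab (clsv s t i.val) (clsv s t k.val) : ℝ))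
      - (if j = k then (0:ℝ) else (dtab (clsv s t j.val) (clsv s t k.val) : ℝ))) * x k
      = μ * x i - μ * x j := by
    rw [← hi, ← hj, ← Finset.sum_sub_distrib]
    congr 1; funext k; ring
  rw [sum_pair _ hij (fun k hki hkj => by
    rw [if_neg (fun h => hki h.symm), if_neg (fun h => hkj h.symm), hcls, sub_self, zero_mul])]
    at hdiff
  rw [if_pos rfl, if_neg hij, if_pos rfl, if_neg (fun h => hij h.symm)] at hdiff
  rw [hcls] at hdiff
  rw [← hcls] at hdiff
  rw [hcc] at hdiff
  -- hdiff : (0 - 2) * x i + (2 - 0) * x j = μ * x i - μ * x j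
  have : (μ + 2) * (x i - x j) = 0 := by
    push_cast at hdiff
    linarith
  rcases mul_eq_zero.1 this with h | h
  · linarith
  · exact absurd (by linarith : x i = x j) hne

lemma eig_mem_imp (s t : ℕ) (hs : 0 < s) (ht : 0 < t) {μ : ℝ} {x : Fin (s + t + 2) → ℝ}
    (hx0 : x ≠ 0) (hx : (Dmat s t).mulVec x = μ • x) :
    μ = -2 ∨ qpoly (s + t) (s * t) μ = 0 := by
  by_cases hful : ∀ i j : Fin (s + t + 2), clsv s t i.val = clsv s t j.val → x i = x j
  swap
  · push_neg at hful
    obtain ⟨i, j, hcls, hne⟩ := hful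
    exact Or.inl (eig_neg_two hx hcls hne)
  right
  set r0 : Fin (s + t + 2) := ⟨0, by omega⟩ with hr0
  set r1 : Fin (s + t + 2) := ⟨s, by omega⟩ with hr1
  set r2 : Fin (s + t + 2) := ⟨s + t, by omega⟩ with hr2
  set r3 : Fin (s + t + 2) := ⟨s + t + 1, by omega⟩ with hr3
  have hc0 : clsv s t r0.val = 0 := clsv0 hs
  have hc1 : clsv s t r1.val = 1 := clsv1 le_rfl (by simp [hr1]; omega)
  have hc2 : clsv s t r2.val = 2 := clsv2 rfl
  have hc3 : clsv s t r3.val = 3 := clsv3 rfl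
  obtain ⟨g, hg0, hg1, hg2, hg3⟩ : ∃ g : ℕ → ℝ,
      g 0 = x r0 ∧ g 1 = x r1 ∧ g 2 = x r2 ∧ g 3 = x r3 :=
    ⟨fun c => if c = 0 then x r0 else if c = 1 then x r1 else if c = 2 then x r2 else x r3,
      by norm_num, by norm_num, by norm_num, by norm_num⟩
  have hxg : x = fun j => g (clsv s t j.val) := by
    funext j
    rcases clsv_cases s t j.val with h | h | h | h <;> rw [h]
    · rw [hg0]; exact hful j r0 (h.trans hc0.symm)
    · rw [hg1]; exact hful j r1 (h.trans hc1.symm)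
    · rw [hg2]; exact hful j r2 (h.trans hc2.symm)
    · rw [hg3]; exact hful j r3 (h.trans hc3.symm)
  rw [hxg] at hx
  have E : ∀ i : Fin (s + t + 2),
      (s : ℝ) * (dtab (clsv s t i.val) 0 : ℕ) * g 0 + t * (dtab (clsv s t i.val) 1 : ℕ) * g 1
        + (dtab (clsv s t i.val) 2 : ℕ) * g 2 + (dtab (clsv s t i.val) 3 : ℕ) * g 3
        - (dtab (clsv s t i.val) (clsv s t i.val) : ℕ) * g (clsv s t i.val)
      = μ * g (clsv s t i.val) := by
    intro i
    have := congrFun hx i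
    rw [mulVec_cls] at this
    simpa using this
  have E0 := E r0; rw [hc0] at E0
  have E1 := E r1; rw [hc1] at E1
  have E2 := E r2; rw [hc2] at E2
  have E3 := E r3; rw [hc3] at E3
  simp only [dtab00, dtab01, dtab02, dtab03, dtab10, dtab11, dtab12, dtab13, dtab20, dtab21, dtab22, dtab23, dtab30, dtab31, dtab32, dtab33] at E0 E1 E2 E3
  push_cast at E0 E1 E2 E3
  -- kernel vector
  have hvker : (Mq s t μ).mulVec ![g 0, g 1, g 2, g 3] = 0 := by
    funext k
    fin_cases k <;>
      simp [Mq, Matrix.mulVec, dotProduct, Fin.sum_univ_four] <;> linarith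
  have hvne : ![g 0, g 1, g 2, g 3] ≠ 0 := by
    obtain ⟨j, hj⟩ := Function.ne_iff.1 hx0
    rw [hxg] at hj
    have hj' : g (clsv s t j.val) ≠ 0 := by simpa using hj
    intro hzero
    have hz : ∀ k : Fin 4, ![g 0, g 1, g 2, g 3] k = 0 := fun k => congrFun hzero k
    have hz0 := hz 0; have hz1 := hz 1; have hz2 := hz 2; have hz3 := hz 3
    simp at hz0 hz1 hz2 hz3
    rcases clsv_cases s t j.val with h | h | h | h <;> rw [h] at hj'
    · exact hj' hz0
    · exact hj' hz1
    · exact hj' hz2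
    · exact hj' hz3
  have hdet : (Mq s t μ).det = 0 :=
    Matrix.exists_mulVec_eq_zero_iff.1 ⟨![g 0, g 1, g 2, g 3], hvne, hvker⟩
  rw [detMq] at hdet
  exact hdet

lemma eig_root_mem (s t : ℕ) (hs : 0 < s) (ht : 0 < t) {μ : ℝ}
    (h : qpoly (s + t) (s * t) μ = 0) :
    ∃ x : Fin (s + t + 2) → ℝ, x ≠ 0 ∧ (Dmat s t).mulVec x = μ • x := by
  have hdet : (Mq s t μ).det = 0 := by rw [detMq]; exact h
  obtain ⟨v, hvne, hvker⟩ := Matrix.exists_mulVec_eq_zero_iff.2 hdet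
  have hv0 := congrFun hvker 0
  have hv1 := congrFun hvker 1
  have hv2 := congrFun hvker 2
  have hv3 := congrFun hvker 3
  simp [Mq, Matrix.mulVec, dotProduct, Fin.sum_univ_four] at hv0 hv1 hv2 hv3
  set r0 : Fin (s + t + 2) := ⟨0, by omega⟩ with hr0
  set r1 : Fin (s + t + 2) := ⟨s, by omega⟩ with hr1
  set r2 : Fin (s + t + 2) := ⟨s + t, by omega⟩ with hr2
  set r3 : Fin (s + t + 2) := ⟨s + t + 1, by omega⟩ with hr3
  have hc0 : clsv s t r0.val = 0 := clsv0 hs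
  have hc1 : clsv s t r1.val = 1 := clsv1 le_rfl (by simp [hr1]; omega)
  have hc2 : clsv s t r2.val = 2 := clsv2 rfl
  have hc3 : clsv s t r3.val = 3 := clsv3 rfl
  obtain ⟨g, hg0, hg1, hg2, hg3⟩ : ∃ g : ℕ → ℝ,
      g 0 = v 0 ∧ g 1 = v 1 ∧ g 2 = v 2 ∧ g 3 = v 3 :=
    ⟨fun c => if c = 0 then v 0 else if c = 1 then v 1 else if c = 2 then v 2 else v 3,
      by norm_num, by norm_num, by norm_num, by norm_num⟩
  refine ⟨fun j => g (clsv s t j.val), ?_, ?_⟩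
  · obtain ⟨k, hk⟩ := Function.ne_iff.1 hvne
    intro hzero
    have hz : ∀ j : Fin (s + t + 2), g (clsv s t j.val) = 0 := fun j => congrFun hzero j
    have hz0 := hz r0; rw [hc0, hg0] at hz0
    have hz1 := hz r1; rw [hc1, hg1] at hz1
    have hz2 := hz r2; rw [hc2, hg2] at hz2
    have hz3 := hz r3; rw [hc3, hg3] at hz3
    fin_cases k <;> simp_all
  · funext i
    rw [mulVec_cls]
    have hsmul : (μ • fun j => g (clsv s t j.val)) i = μ * g (clsv s t i.val) := rfl
    rw [hsmul]
    rcases clsv_cases s t i.val with hcl | hcl | hcl | hcl <;> rw [hcl] <;>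
      simp only [dtab00, dtab01, dtab02, dtab03, dtab10, dtab11, dtab12, dtab13,
        dtab20, dtab21, dtab22, dtab23, dtab30, dtab31, dtab32, dtab33] <;>
      rw [hg0, hg1, hg2, hg3] <;> push_cast <;> linarith



lemma eigset_bddAbove (s t : ℕ) (hs : 0 < s) (ht : 0 < t) :
    ∀ μ ∈ {μ : ℝ | ∃ x : Fin (s + t + 2) → ℝ, x ≠ 0 ∧ (Dmat s t).mulVec x = μ • x},
      μ ≤ lamStar (s + t) (s * t) := by
  intro μ hμ
  obtain ⟨x, hx0, hx⟩ := hμ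
  rcases eig_mem_imp s t hs ht hx0 hx with h | h
  · rw [h]
    have := lamStar_pos (s + t) (s * t)
    linarith
  · exact le_lamStar _ _ h

lemma lam1_Hc (s t : ℕ) (hs : 0 < s) (ht : 0 < t) :
    lam1 (Hgraph s t)ᶜ = lamStar (s + t) (s * t) := by
  unfold lam1
  rw [distMatrix_Hc s t hs ht]
  have hmem : lamStar (s + t) (s * t) ∈
      {μ : ℝ | ∃ x : Fin (s + t + 2) → ℝ, x ≠ 0 ∧ (Dmat s t).mulVec x = μ • x} := by
    obtain ⟨x, hx0, hx⟩ := eig_root_mem s t hs ht (lamStar_root (s + t) (s * t))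
    exact ⟨x, hx0, hx⟩
  apply le_antisymm
  · exact csSup_le ⟨_, hmem⟩ (eigset_bddAbove s t hs ht)
  · exact le_csSup ⟨lamStar (s + t) (s * t), eigset_bddAbove s t hs ht⟩ hmem


/-- For `n ≥ 5` and positive `s, t` with `s + t = n - 2`,
`λ₁(H(s,t)ᶜ) ≤ λ₁(H(⌊n/2⌋-1, ⌈n/2⌉-1)ᶜ)`, with equality iff
`{s,t} = {⌊n/2⌋-1, ⌈n/2⌉-1}`. -/
theorem stmt_3 (n s t : ℕ) (hn : 5 ≤ n) (hs : 0 < s) (ht : 0 < t) (hst : s + t = n - 2) :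
    lam1 (Hgraph s t)ᶜ ≤ lam1 (Hgraph (n / 2 - 1) ((n + 1) / 2 - 1))ᶜ ∧
    (lam1 (Hgraph s t)ᶜ = lam1 (Hgraph (n / 2 - 1) ((n + 1) / 2 - 1))ᶜ ↔
      (s = n / 2 - 1 ∧ t = (n + 1) / 2 - 1) ∨ (s = (n + 1) / 2 - 1 ∧ t = n / 2 - 1)) := by
  have ha : 0 < n / 2 - 1 := by omega
  have hb : 0 < (n + 1) / 2 - 1 := by omega
  have hsum : n / 2 - 1 + ((n + 1) / 2 - 1) = n - 2 := by omega
  have h1 : lam1 (Hgraph s t)ᶜ = lamStar (n - 2) (s * t) := by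
    rw [lam1_Hc s t hs ht, hst]
  have h2 : lam1 (Hgraph (n / 2 - 1) ((n + 1) / 2 - 1))ᶜ
      = lamStar (n - 2) ((n / 2 - 1) * ((n + 1) / 2 - 1)) := by
    rw [lam1_Hc _ _ ha hb, hsum]
  obtain ⟨hle, hiff⟩ := prod_max n s t hn hs ht hst
  constructor
  · rw [h1, h2]
    exact (lamStar_le_iff _).2 hle
  · rw [h1, h2, lamStar_eq_iff]
    exact hiff
end

section
/- Let G be a connected simple graph of diameter greater than 3 whose complement G^c is connected, let e be an edge of G such that the graph G' = G - e obtained by deleting e from G is connected, and suppose G'^c is connected. Then λ1(G'^c) ≤ λ1(G^c). -/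
open SimpleGraph Finset

/-- Supremum of Rayleigh quotients of `toEuclideanLin A`. -/
noncomputable def raySup {V : Type*} [Fintype V] [DecidableEq V] (A : Matrix V V ℝ) : ℝ :=
  ⨆ x : {x : EuclideanSpace ℝ V // x ≠ 0},
    (inner ℝ (A.toEuclideanLin (x : EuclideanSpace ℝ V)) (x : EuclideanSpace ℝ V) : ℝ) /
      ‖(x : EuclideanSpace ℝ V)‖ ^ 2

lemma ray_bdd {V : Type*} [Fintype V] [DecidableEq V] (A : Matrix V V ℝ) :
    BddAbove (Set.range fun x : {x : EuclideanSpace ℝ V // x ≠ 0} =>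
      (inner ℝ (A.toEuclideanLin (x : EuclideanSpace ℝ V)) (x : EuclideanSpace ℝ V) : ℝ) /
        ‖(x : EuclideanSpace ℝ V)‖ ^ 2) := by
  set T := A.toEuclideanLin
  refine ⟨‖LinearMap.toContinuousLinearMap T‖, ?_⟩
  rintro _ ⟨x, rfl⟩
  have hx : (0:ℝ) < ‖(x : EuclideanSpace ℝ V)‖ := norm_pos_iff.mpr x.2
  rw [div_le_iff₀ (by positivity)]
  calc (inner ℝ (T (x : EuclideanSpace ℝ V)) (x : EuclideanSpace ℝ V) : ℝ)
      ≤ ‖T (x : EuclideanSpace ℝ V)‖ * ‖(x : EuclideanSpace ℝ V)‖ := real_inner_le_norm _ _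
    _ ≤ (‖LinearMap.toContinuousLinearMap T‖ * ‖(x : EuclideanSpace ℝ V)‖) *
          ‖(x : EuclideanSpace ℝ V)‖ := by
        have h1 : ‖T (x : EuclideanSpace ℝ V)‖ ≤
            ‖LinearMap.toContinuousLinearMap T‖ * ‖(x : EuclideanSpace ℝ V)‖ := by
          exact (LinearMap.toContinuousLinearMap T).le_opNorm (x : EuclideanSpace ℝ V)
        exact mul_le_mul_of_nonneg_right h1 (norm_nonneg _)
    _ = ‖LinearMap.toContinuousLinearMap T‖ * ‖(x : EuclideanSpace ℝ V)‖ ^ 2 := by ring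

lemma inner_eq_sum {V : Type*} [Fintype V] [DecidableEq V] (A : Matrix V V ℝ) (x y : V → ℝ) :
    (inner ℝ (A.toEuclideanLin ((WithLp.equiv 2 (V → ℝ)).symm x))
        ((WithLp.equiv 2 (V → ℝ)).symm y) : ℝ) = ∑ i, (∑ j, A i j * x j) * y i := by
  simp [Matrix.toEuclideanLin_apply, PiLp.inner_apply, RCLike.inner_apply,
    Matrix.mulVec, dotProduct, mul_comm]

lemma norm_symm_sq {V : Type*} [Fintype V] (x : V → ℝ) :
    ‖(WithLp.equiv 2 (V → ℝ)).symm x‖ ^ 2 = ∑ i, x i ^ 2 := by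
  rw [EuclideanSpace.norm_eq, Real.sq_sqrt (by positivity)]
  simp [sq_abs]

lemma symm_ne_zero {V : Type*} [Fintype V] {x : V → ℝ} (hx : x ≠ 0) :
    (WithLp.equiv 2 (V → ℝ)).symm x ≠ 0 := by
  intro h
  apply hx
  have := congrArg (WithLp.equiv 2 (V → ℝ)) h
  simpa using this

lemma eig_le_raySup {V : Type*} [Fintype V] [DecidableEq V] (A : Matrix V V ℝ) {μ : ℝ}
    (h : ∃ x : V → ℝ, x ≠ 0 ∧ A.mulVec x = μ • x) : μ ≤ raySup A := by
  obtain ⟨y, hy0, hy⟩ := h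
  set x : EuclideanSpace ℝ V := (WithLp.equiv 2 (V → ℝ)).symm y with hxdef
  have hx0 : x ≠ 0 := symm_ne_zero hy0
  have hTx : A.toEuclideanLin x = μ • x := by
    rw [Matrix.toEuclideanLin_apply]
    simp only [hxdef, Equiv.apply_symm_apply, hy]
    simp [hy]
  have hn : (0:ℝ) < ‖x‖ ^ 2 := pow_pos (norm_pos_iff.mpr hx0) 2
  have hval : (inner ℝ (A.toEuclideanLin x) x : ℝ) / ‖x‖ ^ 2 = μ := by
    rw [hTx, real_inner_smul_left, real_inner_self_eq_norm_sq]
    field_simp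
  calc μ = (inner ℝ (A.toEuclideanLin x) x : ℝ) / ‖x‖ ^ 2 := hval.symm
    _ ≤ raySup A := le_ciSup (ray_bdd A) ⟨x, hx0⟩

lemma raySup_mem {V : Type*} [Fintype V] [DecidableEq V] [Nonempty V] (A : Matrix V V ℝ)
    (hA : A.IsHermitian) :
    ∃ x : V → ℝ, x ≠ 0 ∧ A.mulVec x = (raySup A) • x := by
  haveI : Nontrivial (EuclideanSpace ℝ V) := inferInstance
  have hT := (Matrix.isHermitian_iff_isSymmetric.mp hA)
  have h := hT.hasEigenvalue_iSup_of_finiteDimensional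
  have h' : Module.End.HasEigenvalue A.toEuclideanLin (raySup A) := by
    simpa [raySup] using h
  obtain ⟨x, hx⟩ := h'.exists_hasEigenvector
  refine ⟨WithLp.equiv 2 (V → ℝ) x, ?_, ?_⟩
  · intro h0
    apply hx.2
    have := congrArg (WithLp.equiv 2 (V → ℝ)).symm h0
    simpa using this
  · have := hx.apply_eq_smul
    rw [Matrix.toEuclideanLin_apply] at this
    have h2 := congrArg (WithLp.equiv 2 (V → ℝ)) this
    simpa using h2

lemma sSup_eig_mono {V : Type*} [Fintype V] [DecidableEq V] [Nonempty V] {A B : Matrix V V ℝ}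
    (hA : A.IsHermitian) (hB : B.IsHermitian)
    (hA0 : ∀ i j, 0 ≤ A i j) (hAB : ∀ i j, A i j ≤ B i j) :
    sSup {μ : ℝ | ∃ x : V → ℝ, x ≠ 0 ∧ A.mulVec x = μ • x} ≤
      sSup {μ : ℝ | ∃ x : V → ℝ, x ≠ 0 ∧ B.mulVec x = μ • x} := by
  have hSA_le : sSup {μ : ℝ | ∃ x : V → ℝ, x ≠ 0 ∧ A.mulVec x = μ • x} ≤ raySup A := by
    refine csSup_le ⟨raySup A, raySup_mem A hA⟩ (fun μ hμ => eig_le_raySup A hμ)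
  have hSB_ge : raySup B ≤ sSup {μ : ℝ | ∃ x : V → ℝ, x ≠ 0 ∧ B.mulVec x = μ • x} := by
    refine le_csSup ⟨raySup B, fun μ hμ => eig_le_raySup B hμ⟩ (raySup_mem B hB)
  refine hSA_le.trans (le_trans ?_ hSB_ge)
  -- raySup A ≤ raySup B
  obtain ⟨y, hy0, hy⟩ := raySup_mem A hA
  set μ := raySup A with hμdef
  set z : V → ℝ := fun i => |y i| with hzdef
  have hz0 : z ≠ 0 := by
    intro h0
    apply hy0
    funext i
    have := congrFun h0 i
    simpa [hzdef, abs_eq_zero] using this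
  have hS : ∑ i, z i ^ 2 = ∑ i, y i ^ 2 := by simp [hzdef, sq_abs]
  have hpos : (0:ℝ) < ∑ i, y i ^ 2 := by
    obtain ⟨i, hi⟩ : ∃ i, y i ≠ 0 := by
      by_contra h
      push_neg at h
      exact hy0 (funext h)
    have h1 : (0:ℝ) < y i ^ 2 := by positivity
    have h2 := Finset.single_le_sum (f := fun i => y i ^ 2)
      (fun j _ => sq_nonneg _) (Finset.mem_univ i)
    linarith
  have hsum : ∑ i, (∑ j, A i j * y j) * y i = μ * ∑ i, y i ^ 2 := by
    have : ∀ i, (∑ j, A i j * y j) = μ * y i := fun i => congrFun hy i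
    simp only [this]
    rw [Finset.mul_sum]
    congr 1
    funext i
    ring
  have hineq : ∑ i, (∑ j, A i j * y j) * y i ≤ ∑ i, (∑ j, B i j * z j) * z i := by
    have h1 : ∀ i, (∑ j, A i j * y j) * y i = ∑ j, A i j * y j * y i := by
      intro i; rw [Finset.sum_mul]
    have h2 : ∀ i, (∑ j, B i j * z j) * z i = ∑ j, B i j * z j * z i := by
      intro i; rw [Finset.sum_mul]
    simp only [h1, h2]
    refine Finset.sum_le_sum fun i _ => Finset.sum_le_sum fun j _ => ?_
    have ha1 : A i j * (y j * y i) ≤ A i j * (|y j| * |y i|) :=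
      mul_le_mul_of_nonneg_left (by rw [← abs_mul]; exact le_abs_self _) (hA0 i j)
    have ha2 : A i j * (|y j| * |y i|) ≤ B i j * (|y j| * |y i|) :=
      mul_le_mul_of_nonneg_right (hAB i j) (by positivity)
    calc A i j * y j * y i = A i j * (y j * y i) := by ring
      _ ≤ B i j * (|y j| * |y i|) := ha1.trans ha2
      _ = B i j * z j * z i := by simp [hzdef]; ring
  have hray : μ ≤ (inner ℝ (B.toEuclideanLin ((WithLp.equiv 2 (V → ℝ)).symm z))
      ((WithLp.equiv 2 (V → ℝ)).symm z) : ℝ) / ‖(WithLp.equiv 2 (V → ℝ)).symm z‖ ^ 2 := by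
    rw [inner_eq_sum, norm_symm_sq, hS, le_div_iff₀ hpos]
    calc μ * ∑ i, y i ^ 2 = ∑ i, (∑ j, A i j * y j) * y i := hsum.symm
      _ ≤ _ := hineq
  exact hray.trans (le_ciSup (ray_bdd B) ⟨_, symm_ne_zero hz0⟩)


/-- If `G` is connected of diameter `> 3` with `Gᶜ` connected, `e` is an edge
of `G` such that `G' = G - e` is connected and `G'ᶜ` is connected, then `λ₁(G'ᶜ) ≤ λ₁(Gᶜ)`. -/
theorem stmt_5 {V : Type*} [Fintype V] (G : SimpleGraph V)
    (hconn : G.Connected) (hcc : Gᶜ.Connected)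
    (hdiam : ∃ u v : V, 3 < G.dist u v)
    (e : Sym2 V) (he : e ∈ G.edgeSet)
    (hconn' : (G.deleteEdges {e}).Connected) (hcc' : (G.deleteEdges {e})ᶜ.Connected) :
    lam1 (G.deleteEdges {e})ᶜ ≤ lam1 Gᶜ := by
  classical
  haveI : Nonempty V := hconn.nonempty
  have hle : Gᶜ ≤ (G.deleteEdges {e})ᶜ := compl_le_compl (SimpleGraph.deleteEdges_le _)
  have hdist : ∀ u v : V, ((G.deleteEdges {e})ᶜ).dist u v ≤ Gᶜ.dist u v := by
    intro u v
    obtain ⟨p, hp⟩ := hcc.exists_walk_length_eq_dist u v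
    calc ((G.deleteEdges {e})ᶜ).dist u v ≤ (p.mapLe hle).length := SimpleGraph.dist_le _
      _ = p.length := SimpleGraph.Walk.length_map _ _
      _ = Gᶜ.dist u v := hp
  unfold lam1
  refine sSup_eig_mono ?_ ?_ ?_ ?_
  · ext i j
    simp [distMatrix, Matrix.conjTranspose_apply, SimpleGraph.dist_comm]
  · ext i j
    simp [distMatrix, Matrix.conjTranspose_apply, SimpleGraph.dist_comm]
  · intro i j
    simp [distMatrix]
  · intro i j
    simpa [distMatrix] using (hdist i j)
end

section
/- Let G be a connected simple graph of diameter greater than 3 whose complement G^c is connected, and let T be a spanning tree of G such that T^c is connected. Then λ1(G^c) ≥ λ1(T^c), with equality if and only if G = T (i.e., G is itself a tree). -/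
open SimpleGraph Finset

namespace Stmt6Aux

open Matrix Finset

variable {V : Type*} [Fintype V] [DecidableEq V]

noncomputable def eqv2 : (V → ℝ) ≃ EuclideanSpace ℝ V := (WithLp.equiv 2 (V → ℝ)).symm

/-- coefficients of y in the eigenbasis of A -/
noncomputable def coefs {A : Matrix V V ℝ} (hA : A.IsHermitian) (y : V → ℝ) : V → ℝ :=
  fun i => hA.eigenvectorBasis.repr (eqv2 y) i

lemma coefs_eq_inner {A : Matrix V V ℝ} (hA : A.IsHermitian) (y : V → ℝ) (i : V) :
    coefs hA y i = (⇑(hA.eigenvectorBasis i)) ⬝ᵥ y := by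
  rw [coefs, hA.eigenvectorBasis.repr_apply_apply]
  simp [PiLp.inner_apply, RCLike.inner_apply, dotProduct, eqv2]
  exact Finset.sum_congr rfl fun _ _ => mul_comm _ _

lemma transpose_eq_self {A : Matrix V V ℝ} (hA : A.IsHermitian) : Aᵀ = A := by
  ext i j
  have := congrFun (congrFun hA.eq i) j
  simpa [Matrix.conjTranspose_apply] using this

lemma coefs_mulVec {A : Matrix V V ℝ} (hA : A.IsHermitian) (y : V → ℝ) (i : V) :
    coefs hA (A *ᵥ y) i = hA.eigenvalues i * coefs hA y i := by
  rw [coefs_eq_inner, coefs_eq_inner, dotProduct_mulVec, ← mulVec_transpose,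
    transpose_eq_self hA, hA.mulVec_eigenvectorBasis, smul_dotProduct]
  rfl

lemma dot_eq_sum_coefs {A : Matrix V V ℝ} (hA : A.IsHermitian) (y z : V → ℝ) :
    y ⬝ᵥ z = ∑ i, coefs hA y i * coefs hA z i := by
  have h := hA.eigenvectorBasis.repr.inner_map_map (eqv2 y) (eqv2 z)
  rw [PiLp.inner_apply, PiLp.inner_apply] at h
  simp only [RCLike.inner_apply, starRingEnd_apply, star_trivial] at h
  rw [dotProduct]
  calc ∑ i, y i * z i = ∑ i, (eqv2 z).ofLp i * (eqv2 y).ofLp i :=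
        Finset.sum_congr rfl fun i _ => mul_comm (y i) (z i)
    _ = _ := h.symm
    _ = ∑ i, coefs hA y i * coefs hA z i := Finset.sum_congr rfl fun i _ => mul_comm _ _

lemma dot_mulVec_eq_sum {A : Matrix V V ℝ} (hA : A.IsHermitian) (y : V → ℝ) :
    y ⬝ᵥ (A *ᵥ y) = ∑ i, hA.eigenvalues i * (coefs hA y i)^2 := by
  rw [dot_eq_sum_coefs hA]
  refine Finset.sum_congr rfl fun i _ => ?_
  rw [coefs_mulVec hA]; ring

lemma coefs_smul {A : Matrix V V ℝ} (hA : A.IsHermitian) (c : ℝ) (y : V → ℝ) (i : V) :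
    coefs hA (c • y) i = c * coefs hA y i := by
  rw [coefs_eq_inner, coefs_eq_inner, dotProduct_smul]; rfl

lemma eq_zero_of_coefs_eq_zero {A : Matrix V V ℝ} (hA : A.IsHermitian) {y : V → ℝ}
    (h : ∀ i, coefs hA y i = 0) : y = 0 := by
  have : eqv2 y = 0 := by
    have h2 : hA.eigenvectorBasis.repr (eqv2 y) = 0 := by
      ext i; exact h i
    have := hA.eigenvectorBasis.repr.injective (by simpa using h2)
    exact this
  simpa [eqv2] using congrArg (WithLp.equiv 2 (V → ℝ)) this

lemma mem_range_eigenvalues {A : Matrix V V ℝ} (hA : A.IsHermitian) {μ : ℝ} {x : V → ℝ}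
    (hx : x ≠ 0) (hAx : A *ᵥ x = μ • x) : ∃ i, hA.eigenvalues i = μ := by
  by_contra h
  push_neg at h
  apply hx
  apply eq_zero_of_coefs_eq_zero hA
  intro i
  have h1 : coefs hA (A *ᵥ x) i = hA.eigenvalues i * coefs hA x i := coefs_mulVec hA x i
  rw [hAx, coefs_smul] at h1
  by_contra hci
  exact h i (mul_right_cancel₀ hci h1).symm

lemma eigenvalues_mem {A : Matrix V V ℝ} (hA : A.IsHermitian) (i : V) :
    ∃ x : V → ℝ, x ≠ 0 ∧ A *ᵥ x = hA.eigenvalues i • x := by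
  refine ⟨⇑(hA.eigenvectorBasis i), ?_, hA.mulVec_eigenvectorBasis i⟩
  intro h0
  exact hA.eigenvectorBasis.orthonormal.ne_zero i (by ext j; exact congrFun h0 j)

/-- the set of eigenvalues -/
def evalSet (A : Matrix V V ℝ) : Set ℝ := {μ : ℝ | ∃ x : V → ℝ, x ≠ 0 ∧ A.mulVec x = μ • x}

lemma evalSet_eq {A : Matrix V V ℝ} (hA : A.IsHermitian) :
    evalSet A = Set.range hA.eigenvalues := by
  ext μ
  constructor
  · rintro ⟨x, hx, hAx⟩
    exact mem_range_eigenvalues hA hx hAx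
  · rintro ⟨i, hi⟩
    exact hi ▸ eigenvalues_mem hA i

lemma le_csSup_evalSet {A : Matrix V V ℝ} (hA : A.IsHermitian) (i : V) :
    hA.eigenvalues i ≤ sSup (evalSet A) := by
  refine le_csSup ?_ ?_
  · rw [evalSet_eq hA]; exact (Set.finite_range _).bddAbove
  · rw [evalSet_eq hA]; exact ⟨i, rfl⟩

lemma csSup_evalSet_mem {A : Matrix V V ℝ} [Nonempty V] (hA : A.IsHermitian) :
    ∃ i, hA.eigenvalues i = sSup (evalSet A) := by
  have h1 : (evalSet A).Nonempty := by
    rw [evalSet_eq hA]; exact Set.range_nonempty _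
  have h2 : (evalSet A).Finite := by
    rw [evalSet_eq hA]; exact Set.finite_range _
  have h3 := h1.csSup_mem h2
  rw [evalSet_eq hA] at h3
  obtain ⟨i, hi⟩ := h3
  exact ⟨i, by rw [hi, evalSet_eq hA]⟩

lemma rayleigh_le {A : Matrix V V ℝ} (hA : A.IsHermitian) (y : V → ℝ) :
    y ⬝ᵥ (A *ᵥ y) ≤ sSup (evalSet A) * (y ⬝ᵥ y) := by
  rw [dot_mulVec_eq_sum hA, dot_eq_sum_coefs hA, Finset.mul_sum]
  refine Finset.sum_le_sum fun i _ => ?_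
  have := le_csSup_evalSet hA i
  have h2 : (0:ℝ) ≤ (coefs hA y i)^2 := sq_nonneg _
  calc hA.eigenvalues i * (coefs hA y i)^2 ≤ sSup (evalSet A) * (coefs hA y i)^2 := by
        exact mul_le_mul_of_nonneg_right this h2
    _ = sSup (evalSet A) * (coefs hA y i * coefs hA y i) := by ring

lemma eigenvector_of_rayleigh_eq {A : Matrix V V ℝ} (hA : A.IsHermitian) {y : V → ℝ}
    (h : y ⬝ᵥ (A *ᵥ y) = sSup (evalSet A) * (y ⬝ᵥ y)) :
    A *ᵥ y = sSup (evalSet A) • y := by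
  set μ := sSup (evalSet A) with hμ
  have key : ∀ i, hA.eigenvalues i * coefs hA y i = μ * coefs hA y i := by
    have hsum : ∑ i, (μ - hA.eigenvalues i) * (coefs hA y i)^2 = 0 := by
      have := h
      rw [dot_mulVec_eq_sum hA, dot_eq_sum_coefs hA, Finset.mul_sum] at this
      have : ∑ i, (μ * (coefs hA y i * coefs hA y i) - hA.eigenvalues i * (coefs hA y i)^2) = 0 := by
        rw [Finset.sum_sub_distrib, this]; ring
      rw [← this]
      refine Finset.sum_congr rfl fun i _ => ?_; ring
    have hterm : ∀ i ∈ Finset.univ, (μ - hA.eigenvalues i) * (coefs hA y i)^2 = 0 := by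
      rw [← Finset.sum_eq_zero_iff_of_nonneg]
      · exact hsum
      · intro i _
        have := le_csSup_evalSet hA i
        exact mul_nonneg (by linarith) (sq_nonneg _)
    intro i
    have := hterm i (Finset.mem_univ i)
    rcases mul_eq_zero.mp this with h1 | h1
    · have : hA.eigenvalues i = μ := by linarith [sub_eq_zero.mp h1]
      rw [this]
    · have : coefs hA y i = 0 := by
        have := sq_eq_zero_iff.mp h1
        exact this
      rw [this]; ring
  -- now conclude A *ᵥ y = μ • y
  have hc : ∀ i, coefs hA (A *ᵥ y - μ • y) i = 0 := by
    intro i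
    have h1 : coefs hA (A *ᵥ y - μ • y) i = coefs hA (A *ᵥ y) i - coefs hA (μ • y) i := by
      rw [coefs_eq_inner, coefs_eq_inner, coefs_eq_inner, ← dotProduct_sub]
    rw [h1, coefs_mulVec hA, coefs_smul hA, key i, sub_self]
  have := eq_zero_of_coefs_eq_zero hA hc
  have := sub_eq_zero.mp this
  exact this

lemma exists_nonneg_eigenvector {A : Matrix V V ℝ} [Nonempty V] (hA : A.IsHermitian)
    (hnn : ∀ u v, 0 ≤ A u v) :
    ∃ y : V → ℝ, y ≠ 0 ∧ (∀ v, 0 ≤ y v) ∧ A *ᵥ y = sSup (evalSet A) • y := by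
  obtain ⟨i, hi⟩ := csSup_evalSet_mem hA
  obtain ⟨x, hx, hAx⟩ := eigenvalues_mem hA i
  set μ := sSup (evalSet A) with hμ
  rw [hi] at hAx
  set y : V → ℝ := fun v => |x v| with hy
  have hynz : y ≠ 0 := by
    intro h0
    apply hx
    ext v
    have := congrFun h0 v
    simpa [hy] using this
  have hyy : y ⬝ᵥ y = x ⬝ᵥ x := by
    refine Finset.sum_congr rfl fun v _ => ?_
    show |x v| * |x v| = x v * x v
    rw [← abs_mul, abs_mul_self]
  have hxAx : x ⬝ᵥ (A *ᵥ x) = μ * (x ⬝ᵥ x) := by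
    rw [hAx, dotProduct_smul, smul_eq_mul]
  have hge : y ⬝ᵥ (A *ᵥ y) ≥ μ * (y ⬝ᵥ y) := by
    rw [hyy, ← hxAx]
    simp only [dotProduct, mulVec, Finset.mul_sum]
    refine Finset.sum_le_sum fun u _ => ?_
    refine Finset.sum_le_sum fun v _ => ?_
    have h1 : x u * (A u v * x v) ≤ |x u * (A u v * x v)| := le_abs_self _
    calc x u * (A u v * x v) ≤ |x u| * (A u v * |x v|) := by
          rw [abs_mul, abs_mul, abs_of_nonneg (hnn u v)] at h1
          linarith [h1]
      _ = y u * (A u v * y v) := rfl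
  have hle := rayleigh_le hA y
  have heq : y ⬝ᵥ (A *ᵥ y) = μ * (y ⬝ᵥ y) := le_antisymm hle (by linarith)
  exact ⟨y, hynz, fun v => abs_nonneg _, eigenvector_of_rayleigh_eq hA heq⟩

lemma eigenvector_pos {A : Matrix V V ℝ} {y : V → ℝ} {μ : ℝ}
    (hpos : ∀ u v : V, u ≠ v → 0 < A u v) (hdiag : ∀ u, A u u = 0)
    (hynz : y ≠ 0) (hynn : ∀ v, 0 ≤ y v) (hAy : A *ᵥ y = μ • y) (w : V) : 0 < y w := by
  rcases lt_or_eq_of_le (hynn w) with h | h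
  · exact h
  exfalso
  have hw : (A *ᵥ y) w = 0 := by
    rw [hAy]; simp [← h]
  have hz : ∀ v ∈ Finset.univ, A w v * y v = 0 := by
    rw [← Finset.sum_eq_zero_iff_of_nonneg]
    · exact hw
    · intro v _
      rcases eq_or_ne w v with rfl | hne
      · simp [hdiag]
      · exact mul_nonneg (hpos w v hne).le (hynn v)
  apply hynz
  ext v
  rcases eq_or_ne w v with rfl | hne
  · simpa using h.symm
  · have := hz v (Finset.mem_univ v)
    have := (mul_eq_zero.mp this).resolve_left (ne_of_gt (hpos w v hne))
    simpa using this

end Stmt6Aux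

open Stmt6Aux Matrix in
/-- If `G` is connected of diameter `> 3` with `Gᶜ` connected and `T` is a
spanning tree of `G` with `Tᶜ` connected, then `λ₁(Gᶜ) ≥ λ₁(Tᶜ)`, with equality iff `G = T`. -/
theorem stmt_6 {V : Type*} [Fintype V] (G T : SimpleGraph V)
    (hconn : G.Connected) (hcc : Gᶜ.Connected)
    (hdiam : ∃ u v : V, 3 < G.dist u v)
    (hTG : T ≤ G) (hT : T.IsTree) (hTc : Tᶜ.Connected) :
    lam1 Tᶜ ≤ lam1 Gᶜ ∧ (lam1 Gᶜ = lam1 Tᶜ ↔ G = T) := by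
  classical
  obtain ⟨u0, v0, hduv⟩ := hdiam
  haveI : Nonempty V := ⟨u0⟩
  set A := distMatrix Tᶜ with hAdef
  set B := distMatrix Gᶜ with hBdef
  have hAh : A.IsHermitian := by
    ext i j
    simp [hAdef, distMatrix, Matrix.conjTranspose_apply, SimpleGraph.dist_comm]
  have hBh : B.IsHermitian := by
    ext i j
    simp [hBdef, distMatrix, Matrix.conjTranspose_apply, SimpleGraph.dist_comm]
  have hGT : Gᶜ ≤ Tᶜ := fun a b hab => by
    rw [SimpleGraph.compl_adj] at hab ⊢
    exact ⟨hab.1, fun h => hab.2 (hTG h)⟩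
  have hAB : ∀ u v, A u v ≤ B u v := by
    intro u v
    rcases eq_or_ne u v with rfl | hne
    · simp [hAdef, hBdef, distMatrix, SimpleGraph.dist_self]
    · have hr : Gᶜ.Reachable u v := hcc.preconnected u v
      have := SimpleGraph.Reachable.dist_anti hGT hr
      simpa [hAdef, hBdef, distMatrix] using (Nat.cast_le.mpr this : ((Tᶜ.dist u v : ℕ) : ℝ) ≤ ((Gᶜ.dist u v : ℕ) : ℝ))
  have hAnn : ∀ u v, 0 ≤ A u v := fun u v => by
    simp [hAdef, distMatrix]
  have hApos : ∀ u v : V, u ≠ v → 0 < A u v := by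
    intro u v hne
    have := hTc.pos_dist_of_ne hne
    simpa [hAdef, distMatrix] using (Nat.cast_pos.mpr this : (0:ℝ) < ((Tᶜ.dist u v : ℕ) : ℝ))
  have hAdiag : ∀ u, A u u = 0 := fun u => by simp [hAdef, distMatrix, SimpleGraph.dist_self]
  obtain ⟨y, hynz, hynn, hAy⟩ := exists_nonneg_eigenvector hAh hAnn
  have hypos : ∀ w, 0 < y w :=
    eigenvector_pos hApos hAdiag hynz hynn hAy
  have hl1T : lam1 Tᶜ = sSup (evalSet A) := rfl
  have hl1G : lam1 Gᶜ = sSup (evalSet B) := rfl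
  have hyy : (0:ℝ) < y ⬝ᵥ y := by
    refine Finset.sum_pos (fun v _ => mul_pos (hypos v) (hypos v)) Finset.univ_nonempty
  have hA_eq : y ⬝ᵥ (A *ᵥ y) = sSup (evalSet A) * (y ⬝ᵥ y) := by
    rw [hAy, dotProduct_smul, smul_eq_mul]
  have hmono : y ⬝ᵥ (A *ᵥ y) ≤ y ⬝ᵥ (B *ᵥ y) := by
    simp only [dotProduct, mulVec, Finset.mul_sum]
    refine Finset.sum_le_sum fun u _ => Finset.sum_le_sum fun v _ => ?_
    have := hAB u v
    have h2 := (hypos u).le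
    have h3 := (hypos v).le
    exact mul_le_mul_of_nonneg_left (mul_le_mul_of_nonneg_right this h3) h2
  have hineq : sSup (evalSet A) ≤ sSup (evalSet B) := by
    have h1 := rayleigh_le hBh y
    have := hA_eq ▸ (hmono.trans h1)
    exact le_of_mul_le_mul_right this hyy
  refine ⟨hl1T ▸ hl1G ▸ hineq, ?_, fun h => by rw [h]⟩
  intro heq
  by_contra hne
  have hex : ¬ (∀ a b, G.Adj a b → T.Adj a b) := by
    intro hall
    exact hne (le_antisymm (fun a b h => hall a b h) hTG)
  push_neg at hex
  obtain ⟨a, b, hGab, hTab⟩ := hex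
  have hab : a ≠ b := G.ne_of_adj hGab
  have hA1 : A a b = 1 := by
    have : Tᶜ.Adj a b := ⟨hab, hTab⟩
    have := SimpleGraph.dist_eq_one_iff_adj.mpr this
    simp [hAdef, distMatrix, this]
  have hB2 : (2:ℝ) ≤ B a b := by
    have hd0 : 0 < Gᶜ.dist a b := hcc.pos_dist_of_ne hab
    have hd1 : Gᶜ.dist a b ≠ 1 := by
      intro h1
      have := SimpleGraph.dist_eq_one_iff_adj.mp h1
      exact this.2 hGab
    have : 2 ≤ Gᶜ.dist a b := by omega
    simpa [hBdef, distMatrix] using (Nat.cast_le.mpr this : ((2 : ℕ) : ℝ) ≤ ((Gᶜ.dist a b : ℕ) : ℝ))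
  have hstrict : y ⬝ᵥ (A *ᵥ y) < y ⬝ᵥ (B *ᵥ y) := by
    simp only [dotProduct, mulVec, Finset.mul_sum]
    refine Finset.sum_lt_sum (fun u _ => Finset.sum_le_sum fun v _ => ?_) ⟨a, Finset.mem_univ a, ?_⟩
    · have := hAB u v
      have h2 := (hypos u).le
      have h3 := (hypos v).le
      exact mul_le_mul_of_nonneg_left (mul_le_mul_of_nonneg_right this h3) h2
    · refine Finset.sum_lt_sum (fun v _ => ?_) ⟨b, Finset.mem_univ b, ?_⟩
      · have := hAB a v
        have h2 := (hypos a).le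
        have h3 := (hypos v).le
        exact mul_le_mul_of_nonneg_left (mul_le_mul_of_nonneg_right this h3) h2
      · have h2 := hypos a
        have h3 := hypos b
        have : A a b < B a b := by rw [hA1]; linarith
        exact mul_lt_mul_of_pos_left (mul_lt_mul_of_pos_right this h3) h2
  have hlt : sSup (evalSet A) < sSup (evalSet B) := by
    have h1 := rayleigh_le hBh y
    have h2 : sSup (evalSet A) * (y ⬝ᵥ y) < sSup (evalSet B) * (y ⬝ᵥ y) := by
      rw [← hA_eq]
      exact lt_of_lt_of_le hstrict h1
    exact lt_of_mul_lt_mul_right h2 hyy.le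
  rw [hl1G, hl1T] at heq
  linarith [heq ▸ hlt]
end

section
/- Let G be a connected simple graph on n ≥ 7 vertices of diameter greater than 3 whose complement G^c is connected. Suppose there is a unit eigenvector x of D(G^c) corresponding to λ_min(G^c) that has exactly one negative entry. Then λ_min(G^c) ≥ λ_min(T^c(n-3,1)). -/
open SimpleGraph Finset

/- ===================== Auxiliary lemmas ===================== -/

section RayleighAux

open Matrix

variable {V : Type*} [Fintype V] [DecidableEq V]

lemma quadform_eq_sum_aux (M : Matrix V V ℝ) (hM : M.IsHermitian) (x : V → ℝ) :
    x ⬝ᵥ M *ᵥ x = ∑ i, hM.eigenvalues i *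
      (((hM.eigenvectorUnitary : Matrix V V ℝ))ᵀ *ᵥ x) i ^ 2 := by
  set U : Matrix V V ℝ := (hM.eigenvectorUnitary : Matrix V V ℝ) with hU
  have hstar : star U = Uᵀ := by
    rw [Matrix.star_eq_conjTranspose, Matrix.conjTranspose_eq_transpose_of_trivial]
  have hsp := hM.spectral_theorem
  rw [Unitary.conjStarAlgAut_apply, ← hU, hstar] at hsp
  set z := Uᵀ *ᵥ x with hz
  calc x ⬝ᵥ M *ᵥ x
      = x ⬝ᵥ (U * (Matrix.diagonal (RCLike.ofReal ∘ hM.eigenvalues) * Uᵀ)) *ᵥ x := by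
        rw [← mul_assoc, ← hsp]
    _ = z ⬝ᵥ Matrix.diagonal (RCLike.ofReal ∘ hM.eigenvalues) *ᵥ z := by
        rw [← Matrix.mulVec_mulVec, Matrix.dotProduct_mulVec (R := ℝ),
          ← Matrix.mulVec_transpose, ← Matrix.mulVec_mulVec]
    _ = ∑ i, hM.eigenvalues i * z i ^ 2 := by
        simp only [dotProduct, Matrix.mulVec_diagonal, Function.comp,
          RCLike.ofReal_real_eq_id, id_eq]
        exact Finset.sum_congr rfl fun i _ => by ring

lemma dot_eq_sum_aux (M : Matrix V V ℝ) (hM : M.IsHermitian) (x : V → ℝ) :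
    x ⬝ᵥ x = ∑ i, (((hM.eigenvectorUnitary : Matrix V V ℝ))ᵀ *ᵥ x) i ^ 2 := by
  set U : Matrix V V ℝ := (hM.eigenvectorUnitary : Matrix V V ℝ) with hU
  have hstar : star U = Uᵀ := by
    rw [Matrix.star_eq_conjTranspose, Matrix.conjTranspose_eq_transpose_of_trivial]
  have hUU : U * Uᵀ = 1 := by
    have := (Matrix.mem_unitaryGroup_iff).mp hM.eigenvectorUnitary.2
    rwa [hstar] at this
  have : (Uᵀ *ᵥ x) ⬝ᵥ (Uᵀ *ᵥ x) = x ⬝ᵥ x := by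
    rw [Matrix.mulVec_transpose, ← Matrix.dotProduct_mulVec (R := ℝ),
      Matrix.mulVec_vecMul, hUU, Matrix.one_mulVec]
  rw [← this]
  simp [dotProduct, sq]

lemma sInf_mul_le_quadform (M : Matrix V V ℝ) (hM : M.IsHermitian) [Nonempty V] (y : V → ℝ) :
    sInf {μ : ℝ | ∃ x : V → ℝ, x ≠ 0 ∧ M.mulVec x = μ • x} * (y ⬝ᵥ y) ≤ y ⬝ᵥ M *ᵥ y := by
  set S : Set ℝ := {μ : ℝ | ∃ x : V → ℝ, x ≠ 0 ∧ M.mulVec x = μ • x} with hS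
  set lstar := Finset.univ.inf' Finset.univ_nonempty hM.eigenvalues with hlstar
  have hray : ∀ xx : V → ℝ, lstar * (xx ⬝ᵥ xx) ≤ xx ⬝ᵥ M *ᵥ xx := by
    intro xx
    rw [quadform_eq_sum_aux M hM xx, dot_eq_sum_aux M hM xx, Finset.mul_sum]
    refine Finset.sum_le_sum fun i _ => ?_
    have h1 : lstar ≤ hM.eigenvalues i := Finset.inf'_le _ (Finset.mem_univ i)
    nlinarith [sq_nonneg ((((hM.eigenvectorUnitary : Matrix V V ℝ))ᵀ *ᵥ xx) i)]
  have hmem : lstar ∈ S := by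
    obtain ⟨i, _, hieq⟩ := Finset.exists_mem_eq_inf'
      (Finset.univ_nonempty (α := V)) hM.eigenvalues
    refine ⟨⇑(hM.eigenvectorBasis i), ?_, ?_⟩
    · intro h
      apply hM.eigenvectorBasis.orthonormal.ne_zero i
      ext j
      exact congrFun h j
    · rw [hlstar, hieq]
      exact hM.mulVec_eigenvectorBasis i
  have hbdd : BddBelow S := by
    refine ⟨lstar, fun μ hμ => ?_⟩
    obtain ⟨xx, hxx0, hxxe⟩ := hμ
    have h := hray xx
    rw [show M *ᵥ xx = M.mulVec xx from rfl, hxxe] at h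
    have hsm : xx ⬝ᵥ (μ • xx) = μ * (xx ⬝ᵥ xx) := by
      simp [dotProduct_smul, smul_eq_mul]
    rw [hsm] at h
    have hpos : 0 < xx ⬝ᵥ xx := by
      rcases lt_or_eq_of_le (Finset.sum_nonneg fun i (_ : i ∈ Finset.univ) =>
        mul_self_nonneg (xx i)) with h' | h'
      · exact h'
      · exact absurd (dotProduct_self_eq_zero.mp h'.symm) hxx0
    exact le_of_mul_le_mul_right h hpos
  have h1 : sInf S ≤ lstar := csInf_le hbdd hmem
  have h2 : 0 ≤ y ⬝ᵥ y := Finset.sum_nonneg fun i _ => mul_self_nonneg (y i)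
  calc sInf S * (y ⬝ᵥ y) ≤ lstar * (y ⬝ᵥ y) := mul_le_mul_of_nonneg_right h1 h2
    _ ≤ y ⬝ᵥ M *ᵥ y := hray y

end RayleighAux

section DistAux

variable {W : Type*}

lemma dist_ge_two_aux (H : SimpleGraph W) {u v : W} (hne : u ≠ v) (hadj : ¬H.Adj u v)
    (hr : H.Reachable u v) : 2 ≤ H.dist u v := by
  have h0 := hr.pos_dist_of_ne hne
  have h1 : H.dist u v ≠ 1 := fun h => hadj (SimpleGraph.dist_eq_one_iff_adj.mp h)
  omega

lemma dist_ge_three_aux (H : SimpleGraph W) {u v : W} (hr : H.Reachable u v) (hne : u ≠ v)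
    (hadj : ¬H.Adj u v) (hmid : ∀ z, H.Adj u z → ¬H.Adj z v) : 3 ≤ H.dist u v := by
  obtain ⟨p, hp⟩ := hr.exists_walk_length_eq_dist
  cases p with
  | nil => exact absurd rfl hne
  | cons h q =>
    cases q with
    | nil => exact absurd h hadj
    | cons h2 q2 =>
      cases q2 with
      | nil => exact absurd h2 (hmid _ h)
      | cons h3 q3 =>
        simp only [SimpleGraph.Walk.length_cons] at hp
        omega

open scoped Classical in
lemma compl_dist_eq_aux {V' : Type*} {G : SimpleGraph V'} (hconn : G.Connected)
    (hcc : Gᶜ.Connected) {u0 v0 : V'} (h4 : 3 < G.dist u0 v0) {u v : V'} (huv : u ≠ v) :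
    Gᶜ.dist u v = if G.Adj u v then 2 else 1 := by
  by_cases hadj : G.Adj u v
  · rw [if_pos hadj]
    have hz : ∃ z, ¬G.Adj u z ∧ ¬G.Adj v z ∧ z ≠ u ∧ z ≠ v := by
      by_contra hcon
      push_neg at hcon
      have key : ∀ p, G.dist p u ≤ 1 ∨ G.dist p v ≤ 1 := by
        intro p
        by_cases hpu : p = u
        · left; simp [hpu, SimpleGraph.dist_self]
        by_cases hpv : p = v
        · right; simp [hpv, SimpleGraph.dist_self]
        by_cases h1 : G.Adj u p
        · left; exact le_of_eq (SimpleGraph.dist_eq_one_iff_adj.mpr h1.symm)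
        by_cases h2 : G.Adj v p
        · right; exact le_of_eq (SimpleGraph.dist_eq_one_iff_adj.mpr h2.symm)
        exact absurd (hcon p h1 h2 hpu) hpv
      have hd1 : G.dist u v = 1 := SimpleGraph.dist_eq_one_iff_adj.mpr hadj
      have hd2 : G.dist v u = 1 := SimpleGraph.dist_eq_one_iff_adj.mpr hadj.symm
      have t1 := hconn.dist_triangle (u := u0) (v := u) (w := v0)
      have t2 := hconn.dist_triangle (u := u0) (v := v) (w := v0)
      have t3 := hconn.dist_triangle (u := u) (v := v) (w := v0)
      have t4 := hconn.dist_triangle (u := v) (v := u) (w := v0)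
      have c1 : G.dist u v0 = G.dist v0 u := SimpleGraph.dist_comm
      have c2 : G.dist v v0 = G.dist v0 v := SimpleGraph.dist_comm
      rcases key u0 with ha | ha <;> rcases key v0 with hb | hb <;> omega
    obtain ⟨z, hzu, hzv, hzneu, hznev⟩ := hz
    have hadj1 : Gᶜ.Adj u z := by
      rw [SimpleGraph.compl_adj _ _ _]; exact ⟨hzneu.symm, hzu⟩
    have hadj2 : Gᶜ.Adj z v := by
      rw [SimpleGraph.compl_adj _ _ _]; exact ⟨hznev, fun h => hzv h.symm⟩
    have hle : Gᶜ.dist u v ≤ 2 := by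
      have := SimpleGraph.dist_le
        (SimpleGraph.Walk.cons hadj1 (SimpleGraph.Walk.cons hadj2 SimpleGraph.Walk.nil))
      simpa using this
    have hge : 2 ≤ Gᶜ.dist u v := by
      refine dist_ge_two_aux Gᶜ huv ?_ (hcc.preconnected u v)
      rw [SimpleGraph.compl_adj _ _ _]
      push_neg
      intro _
      exact hadj
    omega
  · rw [if_neg hadj]
    exact SimpleGraph.dist_eq_one_iff_adj.mpr ((SimpleGraph.compl_adj _ _ _).mpr ⟨huv, hadj⟩)

end DistAux


section TsideAux

open Matrix

set_option maxHeartbeats 1000000 in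
lemma lamMin_T_le (a : ℕ) (ha : 4 ≤ a) : lamMin (Tdouble a 1)ᶜ ≤ -3 := by
  classical
  haveI : Nonempty (Fin (a + 1 + 2)) := ⟨⟨0, by omega⟩⟩
  set T : SimpleGraph (Fin (a + 1 + 2)) := Tdouble a 1 with hT
  set M : Matrix (Fin (a + 1 + 2)) (Fin (a + 1 + 2)) ℝ := distMatrix Tᶜ with hM
  set v0 : Fin (a + 1 + 2) := ⟨0, by omega⟩ with hv0
  set v1 : Fin (a + 1 + 2) := ⟨1, by omega⟩ with hv1
  set v2 : Fin (a + 1 + 2) := ⟨2, by omega⟩ with hv2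
  set vL : Fin (a + 1 + 2) := ⟨a + 2, by omega⟩ with hvL
  have e01 : v0 ≠ v1 := by simp only [hv0, hv1, ne_eq, Fin.mk.injEq]; omega
  have e02 : v0 ≠ v2 := by simp only [hv0, hv2, ne_eq, Fin.mk.injEq]; omega
  have e0L : v0 ≠ vL := by simp only [hv0, hvL, ne_eq, Fin.mk.injEq]; omega
  have e12 : v1 ≠ v2 := by simp only [hv1, hv2, ne_eq, Fin.mk.injEq]; omega
  have e1L : v1 ≠ vL := by simp only [hv1, hvL, ne_eq, Fin.mk.injEq]; omega
  have e2L : v2 ≠ vL := by simp only [hv2, hvL, ne_eq, Fin.mk.injEq]; omega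
  -- adjacency facts in the complement
  have hvalL : vL.val = a + 2 := rfl
  have hval0 : v0.val = 0 := rfl
  have hval1 : v1.val = 1 := rfl
  have hval2 : v2.val = 2 := rfl
  have A1 : Tᶜ.Adj v0 vL := by
    rw [SimpleGraph.compl_adj _ _ _]
    refine ⟨e0L, fun h => ?_⟩
    rw [hT, Tdouble, SimpleGraph.fromRel_adj] at h
    rcases h with ⟨-, h⟩
    rw [hval0, hvalL] at h
    omega
  have A2 : Tᶜ.Adj vL v2 := by
    rw [SimpleGraph.compl_adj _ _ _]
    refine ⟨e2L.symm, fun h => ?_⟩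
    rw [hT, Tdouble, SimpleGraph.fromRel_adj] at h
    rcases h with ⟨-, h⟩
    rw [hval2, hvalL] at h
    omega
  have A3 : Tᶜ.Adj v2 v1 := by
    rw [SimpleGraph.compl_adj _ _ _]
    refine ⟨e12.symm, fun h => ?_⟩
    rw [hT, Tdouble, SimpleGraph.fromRel_adj] at h
    rcases h with ⟨-, h⟩
    rw [hval2, hval1] at h
    omega
  have N1 : ¬ Tᶜ.Adj v0 v1 := by
    intro h
    rw [SimpleGraph.compl_adj _ _ _] at h
    refine h.2 ?_
    rw [hT, Tdouble, SimpleGraph.fromRel_adj]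
    exact ⟨e01, Or.inl (Or.inl ⟨hval0, hval1⟩)⟩
  have N2 : ¬ Tᶜ.Adj v0 v2 := by
    intro h
    rw [SimpleGraph.compl_adj _ _ _] at h
    refine h.2 ?_
    rw [hT, Tdouble, SimpleGraph.fromRel_adj]
    refine ⟨e02, Or.inl (Or.inr (Or.inl ⟨hval0, ?_, ?_⟩))⟩ <;> rw [hval2] <;> omega
  have NL1 : ¬ Tᶜ.Adj vL v1 := by
    intro h
    rw [SimpleGraph.compl_adj _ _ _] at h
    refine h.2 ?_
    rw [hT, Tdouble, SimpleGraph.fromRel_adj]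
    exact ⟨e1L.symm, Or.inr (Or.inr (Or.inr ⟨hval1, by rw [hvalL]⟩))⟩
  have N3 : ¬ Tᶜ.Adj v1 vL := fun h => NL1 h.symm
  have N4 : ∀ z, Tᶜ.Adj v0 z → z = vL := by
    intro z hz
    rw [SimpleGraph.compl_adj _ _ _] at hz
    by_contra hne2
    have h1 : z.val ≠ 0 := by
      intro h
      exact hz.1 (Fin.ext (by rw [hval0, h])).symm
    have h2 : z.val ≠ a + 2 := by
      intro h
      exact hne2 (Fin.ext (by rw [hvalL, h]))
    have h3 : z.val < a + 1 + 2 := z.isLt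
    refine hz.2 ?_
    rw [hT, Tdouble, SimpleGraph.fromRel_adj]
    refine ⟨fun h => h1 (by rw [← h, hval0]), ?_⟩
    rcases Nat.lt_or_ge z.val 2 with hlt | hge
    · exact Or.inl (Or.inl ⟨hval0, by omega⟩)
    · exact Or.inl (Or.inr (Or.inl ⟨hval0, by omega, by omega⟩))
  -- walks and reachability
  have W01 : Tᶜ.Walk v0 v1 := SimpleGraph.Walk.cons A1 (SimpleGraph.Walk.cons A2
    (SimpleGraph.Walk.cons A3 SimpleGraph.Walk.nil))
  have r01 : Tᶜ.Reachable v0 v1 := ⟨W01⟩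
  have r02 : Tᶜ.Reachable v0 v2 := ⟨SimpleGraph.Walk.cons A1
    (SimpleGraph.Walk.cons A2 SimpleGraph.Walk.nil)⟩
  have r1L : Tᶜ.Reachable v1 vL := ⟨SimpleGraph.Walk.cons A3.symm
    (SimpleGraph.Walk.cons A2.symm SimpleGraph.Walk.nil)⟩
  have r2L : Tᶜ.Reachable v2 vL := ⟨SimpleGraph.Walk.cons A2.symm SimpleGraph.Walk.nil⟩
  -- distance bounds
  have d01 : 3 ≤ Tᶜ.dist v0 v1 := by
    refine dist_ge_three_aux Tᶜ r01 e01 N1 ?_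
    intro z hz
    rw [N4 z hz]
    exact NL1
  have d02 : 2 ≤ Tᶜ.dist v0 v2 := dist_ge_two_aux Tᶜ e02 N2 r02
  have d1L : 2 ≤ Tᶜ.dist v1 vL := dist_ge_two_aux Tᶜ e1L N3 r1L
  have d2L : 1 ≤ Tᶜ.dist v2 vL := r2L.pos_dist_of_ne e2L
  have u0L : Tᶜ.dist v0 vL ≤ 1 :=
    le_of_eq (SimpleGraph.dist_eq_one_iff_adj.mpr A1)
  have u12 : Tᶜ.dist v1 v2 ≤ 1 :=
    le_of_eq (SimpleGraph.dist_eq_one_iff_adj.mpr A3.symm)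
  -- the distance matrix
  have hMval : ∀ i j, M i j = (Tᶜ.dist i j : ℝ) := fun i j => rfl
  have hherm : M.IsHermitian := by
    apply Matrix.ext
    intro i j
    simp only [Matrix.conjTranspose_apply, hMval, star_trivial]
    exact_mod_cast congrArg (Nat.cast (R := ℝ)) (SimpleGraph.dist_comm (G := Tᶜ) (u := j) (v := i))
  -- real bounds
  have hM01 : (3 : ℝ) ≤ M v0 v1 := by rw [hMval]; exact_mod_cast d01
  have hM02 : (2 : ℝ) ≤ M v0 v2 := by rw [hMval]; exact_mod_cast d02
  have hM1L : (2 : ℝ) ≤ M v1 vL := by rw [hMval]; exact_mod_cast d1L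
  have hM2L : (1 : ℝ) ≤ M v2 vL := by rw [hMval]; exact_mod_cast d2L
  have hM0L : M v0 vL ≤ 1 := by rw [hMval]; exact_mod_cast u0L
  have hM12 : M v1 v2 ≤ 1 := by rw [hMval]; exact_mod_cast u12
  have hsym : ∀ i j, M i j = M j i := by
    intro i j
    rw [hMval, hMval]
    exact_mod_cast congrArg (Nat.cast (R := ℝ)) (SimpleGraph.dist_comm (G := Tᶜ) (u := i) (v := j))
  have hdiag : ∀ i, M i i = 0 := by
    intro i; rw [hMval]; simp [SimpleGraph.dist_self]
  -- test vector
  obtain ⟨y, hy⟩ : ∃ y : Fin (a + 1 + 2) → ℝ, y = fun v => if v = v0 then (-5) else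
      if v = v1 then 5 else if v = v2 then 2 else if v = vL then (-2) else 0 := ⟨_, rfl⟩
  have hyv0 : y v0 = -5 := by simp [hy]
  have hyv1 : y v1 = 5 := by simp [hy, e01.symm]
  have hyv2 : y v2 = 2 := by simp [hy, e02.symm, e12.symm]
  have hyvL : y vL = -2 := by simp [hy, e0L.symm, e1L.symm, e2L.symm]
  obtain ⟨s4, hs4⟩ : ∃ s4 : Finset (Fin (a + 1 + 2)), s4 = {v0, v1, v2, vL} := ⟨_, rfl⟩
  have hy_out : ∀ u, u ∉ s4 → y u = 0 := by
    intro u hu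
    simp only [hs4, Finset.mem_insert, Finset.mem_singleton, not_or] at hu
    simp [hy, hu.1, hu.2.1, hu.2.2.1, hu.2.2.2]
  have hs4sum : ∀ f : Fin (a + 1 + 2) → ℝ, ∑ v ∈ s4, f v = f v0 + f v1 + f v2 + f vL := by
    intro f
    have h1 : v0 ∉ ({v1, v2, vL} : Finset (Fin (a + 1 + 2))) := by simp [e01, e02, e0L]
    have h2 : v1 ∉ ({v2, vL} : Finset (Fin (a + 1 + 2))) := by simp [e12, e1L]
    have h3 : v2 ∉ ({vL} : Finset (Fin (a + 1 + 2))) := by simp [e2L]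
    rw [hs4, Finset.sum_insert h1, Finset.sum_insert h2, Finset.sum_insert h3,
      Finset.sum_singleton]
    ring
  have hred : y ⬝ᵥ M *ᵥ y = ∑ u ∈ s4, ∑ v ∈ s4, y u * (M u v * y v) := by
    have inner : ∀ u, (M *ᵥ y) u = ∑ v ∈ s4, M u v * y v := by
      intro u
      show ∑ v, M u v * y v = _
      exact (Finset.sum_subset (Finset.subset_univ s4)
        (fun v _ hv => by rw [hy_out v hv, mul_zero])).symm
    calc y ⬝ᵥ M *ᵥ y = ∑ u, y u * (M *ᵥ y) u := rfl
      _ = ∑ u ∈ s4, y u * (M *ᵥ y) u := (Finset.sum_subset (Finset.subset_univ s4)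
          (fun u _ hu => by rw [hy_out u hu, zero_mul])).symm
      _ = ∑ u ∈ s4, ∑ v ∈ s4, y u * (M u v * y v) :=
          Finset.sum_congr rfl fun u _ => by rw [inner u, Finset.mul_sum]
  have hyy : y ⬝ᵥ y = 58 := by
    have : y ⬝ᵥ y = ∑ u ∈ s4, y u * y u := by
      calc y ⬝ᵥ y = ∑ u, y u * y u := rfl
        _ = ∑ u ∈ s4, y u * y u := (Finset.sum_subset (Finset.subset_univ s4)
            (fun u _ hu => by rw [hy_out u hu, zero_mul])).symm
    rw [this, hs4sum, hyv0, hyv1, hyv2, hyvL]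
    norm_num
  have hQ : y ⬝ᵥ M *ᵥ y ≤ -174 := by
    rw [hred, hs4sum (fun u => ∑ v ∈ s4, y u * (M u v * y v)),
      hs4sum (fun v => y v0 * (M v0 v * y v)), hs4sum (fun v => y v1 * (M v1 v * y v)),
      hs4sum (fun v => y v2 * (M v2 v * y v)), hs4sum (fun v => y vL * (M vL v * y v)),
      hyv0, hyv1, hyv2, hyvL, hdiag v0, hdiag v1, hdiag v2, hdiag vL,
      hsym v1 v0, hsym v2 v0, hsym v2 v1, hsym vL v0, hsym vL v1, hsym vL v2]
    nlinarith [hM01, hM02, hM1L, hM2L, hM0L, hM12]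
  have hkey := sInf_mul_le_quadform M hherm y
  rw [hyy] at hkey
  have hfin : lamMin (Tdouble a 1)ᶜ * 58 ≤ y ⬝ᵥ M *ᵥ y := hkey
  linarith [hQ, hfin]

end TsideAux

/-- Let `G` be connected on `n ≥ 7` vertices of diameter `> 3` with `Gᶜ`
connected. If some unit eigenvector of `D(Gᶜ)` for `λmin(Gᶜ)` has exactly one negative
entry, then `λmin(Gᶜ) ≥ λmin(T(n-3,1)ᶜ)`. -/
theorem stmt_10 {V : Type*} [Fintype V] [DecidableEq V] (n : ℕ) (G : SimpleGraph V)
    (hn : 7 ≤ n) (hcard : Fintype.card V = n)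
    (hconn : G.Connected) (hcc : Gᶜ.Connected)
    (hdiam : ∃ u v : V, 3 < G.dist u v)
    (x : V → ℝ) (hunit : ∑ v : V, x v ^ 2 = 1)
    (heig : (distMatrix Gᶜ).mulVec x = lamMin Gᶜ • x)
    (hneg : (Finset.univ.filter fun v : V => x v < 0).card = 1) :
    lamMin (Tdouble (n - 3) 1)ᶜ ≤ lamMin Gᶜ := by
  classical
  obtain ⟨u0, v0, h4⟩ := hdiam
  set lam := lamMin Gᶜ with hlam
  -- distance matrix entries of the complement
  have hD : ∀ u v : V, u ≠ v → distMatrix Gᶜ u v = 1 + (if G.Adj u v then 1 else 0) := by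
    intro u v huv
    have h := compl_dist_eq_aux hconn hcc h4 huv
    show ((Gᶜ.dist u v : ℕ) : ℝ) = _
    rw [h]
    split_ifs <;> norm_num
  have hdiag : ∀ v : V, distMatrix Gᶜ v v = 0 := by
    intro v
    show ((Gᶜ.dist v v : ℕ) : ℝ) = 0
    simp [SimpleGraph.dist_self]
  -- componentwise eigen-equation
  have heq : ∀ v, ∑ u, distMatrix Gᶜ v u * x u = lam * x v := by
    intro v
    have h := congrFun heig v
    simpa [Matrix.mulVec, dotProduct, smul_eq_mul] using h
  obtain ⟨t, ht⟩ : ∃ t : V → ℝ,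
      t = fun v => ∑ u ∈ Finset.univ.filter (fun u => G.Adj v u), x u := ⟨_, rfl⟩
  have htapp : ∀ v, t v = ∑ u ∈ Finset.univ.filter (fun u => G.Adj v u), x u :=
    fun v => by rw [ht]
  obtain ⟨s, hs⟩ : ∃ s : ℝ, s = ∑ v, x v := ⟨_, rfl⟩
  have E1 : ∀ v, t v = (lam + 1) * x v - s := by
    intro v
    have h := heq v
    have hsplit : ∑ u, distMatrix Gᶜ v u * x u = (s - x v) + t v := by
      rw [← Finset.add_sum_erase _ _ (Finset.mem_univ v), hdiag v, zero_mul, zero_add]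
      have hterm : ∀ u ∈ Finset.univ.erase v,
          distMatrix Gᶜ v u * x u = x u + (if G.Adj v u then x u else 0) := by
        intro u hu
        have hvu : v ≠ u := fun h' => (Finset.mem_erase.mp hu).1 h'.symm
        rw [hD v u hvu]
        split_ifs <;> ring
      rw [Finset.sum_congr rfl hterm, Finset.sum_add_distrib]
      congr 1
      · rw [Finset.sum_erase_eq_sub (Finset.mem_univ v), hs]
      · rw [Finset.sum_erase _ (by simp), htapp v]
        exact (Finset.sum_filter _ _).symm
    rw [hsplit] at h
    linarith
  -- the unique negative vertex
  obtain ⟨w, hwset⟩ := Finset.card_eq_one.mp hneg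
  have hxw : x w < 0 := by
    have hmem : w ∈ Finset.univ.filter (fun v => x v < 0) :=
      hwset ▸ Finset.mem_singleton_self w
    exact (Finset.mem_filter.mp hmem).2
  have hpos : ∀ v, v ≠ w → 0 ≤ x v := by
    intro v hv
    by_contra hneg'
    push_neg at hneg'
    have hmem : v ∈ Finset.univ.filter (fun v => x v < 0) :=
      Finset.mem_filter.mpr ⟨Finset.mem_univ v, hneg'⟩
    rw [hwset, Finset.mem_singleton] at hmem
    exact hv hmem
  have htv_nonneg : ∀ v, (∀ u, G.Adj v u → u ≠ w) → 0 ≤ t v := by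
    intro v hv
    rw [htapp v]
    exact Finset.sum_nonneg fun u hu => hpos u (hv u (Finset.mem_filter.mp hu).2)
  have htw : 0 ≤ t w := htv_nonneg w (fun u hu => (G.ne_of_adj hu).symm)
  -- a non-neighbour of w
  have hqex : ∃ q, q ≠ w ∧ ¬G.Adj w q := by
    by_contra hcon
    push_neg at hcon
    have hb1 : G.dist u0 w ≤ 1 := by
      by_cases h : u0 = w
      · simp [h, SimpleGraph.dist_self]
      · exact le_of_eq (SimpleGraph.dist_eq_one_iff_adj.mpr (hcon u0 h).symm)
    have hb2 : G.dist w v0 ≤ 1 := by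
      by_cases h : v0 = w
      · simp [h, SimpleGraph.dist_self]
      · exact le_of_eq (SimpleGraph.dist_eq_one_iff_adj.mpr (hcon v0 h))
    have htri := hconn.dist_triangle (u := u0) (v := w) (w := v0)
    omega
  obtain ⟨q, hqw, hqadj⟩ := hqex
  have htq : 0 ≤ t q := htv_nonneg q (fun u hu huw => hqadj ((huw ▸ hu).symm))
  -- the sum of entries is nonpositive
  have hsle : s ≤ 0 := by
    rcases le_or_gt (lam + 1) 0 with hl | hl
    · nlinarith [E1 q, htq, hpos q hqw]
    · nlinarith [E1 w, htw, hxw]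
  -- summed identity
  have hsum_xt : ∑ v, x v * t v = (lam + 1) - s ^ 2 := by
    calc ∑ v, x v * t v = ∑ v, ((lam + 1) * x v ^ 2 - s * x v) :=
          Finset.sum_congr rfl fun v _ => by rw [E1 v]; ring
      _ = (lam + 1) * (∑ v, x v ^ 2) - s * (∑ v, x v) := by
          rw [Finset.sum_sub_distrib, Finset.mul_sum, Finset.mul_sum]
      _ = (lam + 1) - s ^ 2 := by rw [hunit, ← hs]; ring
  -- bounds
  have hxw2 : x w ^ 2 ≤ 1 := by
    have h := Finset.single_le_sum (f := fun v => x v ^ 2)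
      (fun i _ => sq_nonneg (x i)) (Finset.mem_univ w)
    rw [hunit] at h
    exact h
  have htw_le : t w ≤ s - x w := by
    have hsub : Finset.univ.filter (fun u => G.Adj w u) ⊆ Finset.univ.erase w := by
      intro u hu
      exact Finset.mem_erase.mpr
        ⟨(G.ne_of_adj (Finset.mem_filter.mp hu).2).symm, Finset.mem_univ u⟩
    have h := Finset.sum_le_sum_of_subset_of_nonneg hsub
      (fun u hu _ => hpos u (Finset.mem_erase.mp hu).1)
    rw [Finset.sum_erase_eq_sub (Finset.mem_univ w)] at h
    rw [htapp w, hs]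
    exact h
  have hxw_s : 0 ≤ x w * s := by nlinarith [hxw.le, hsle]
  have hw_term : x w * (s - x w) ≤ x w * t w := mul_le_mul_of_nonpos_left htw_le hxw.le
  have hv_term : ∀ v, v ≠ w → x v * x w ≤ x v * t v := by
    intro v hv
    have hxv := hpos v hv
    have hwle : x w ≤ t v := by
      by_cases hadj : G.Adj v w
      · have hmem : w ∈ Finset.univ.filter (fun u => G.Adj v u) :=
          Finset.mem_filter.mpr ⟨Finset.mem_univ w, hadj⟩
        have h2 : 0 ≤ ∑ u ∈ (Finset.univ.filter (fun u => G.Adj v u)).erase w, x u :=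
          Finset.sum_nonneg fun u hu => hpos u (Finset.mem_erase.mp hu).1
        have h3 := Finset.add_sum_erase _ (fun u => x u) hmem
        rw [htapp v]
        linarith
      · have h0 : 0 ≤ t v := htv_nonneg v (fun u hu huw => hadj (huw ▸ hu))
        linarith [hxw.le]
    exact mul_le_mul_of_nonneg_left hwle hxv
  have hrest : x w * (s - x w) ≤ ∑ v ∈ Finset.univ.erase w, x v * t v := by
    have h1 : ∑ v ∈ Finset.univ.erase w, x v * x w
        ≤ ∑ v ∈ Finset.univ.erase w, x v * t v :=
      Finset.sum_le_sum fun v hv => hv_term v (Finset.mem_erase.mp hv).1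
    have h2 : ∑ v ∈ Finset.univ.erase w, x v * x w = (s - x w) * x w := by
      rw [← Finset.sum_mul, Finset.sum_erase_eq_sub (Finset.mem_univ w), ← hs]
    nlinarith [h1, h2]
  have hsplitsum : ∑ v, x v * t v = x w * t w + ∑ v ∈ Finset.univ.erase w, x v * t v :=
    (Finset.add_sum_erase _ _ (Finset.mem_univ w)).symm
  have hexp : x w * (s - x w) = x w * s - x w ^ 2 := by ring
  have hG : -3 ≤ lam := by
    nlinarith [hsum_xt, hsplitsum, hw_term, hrest, hexp, hxw_s, hxw2, sq_nonneg s]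
  have hTle : lamMin (Tdouble (n - 3) 1)ᶜ ≤ -3 := lamMin_T_le (n - 3) (by omega)
  linarith [hG, hTle]
end
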